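/- arXiv:0804.4873 — 3 statements merged into one kernel-verified Lean document; each statement's English description precedes it below -/
import Mathlib

section
/- Let Ω = {(x,y) ∈ ℝ² : 0 < x < 1, 0 < |y| < x^{1/α}} with 0 < α ≤ 1 and let d(x,y) denote the distance from (x,y) to ∂Ω. Then for every β > −1 the integral ∫_Ω d(x,y)^β dx dy is finite. -/
open MeasureTheory Set Metric

/-- The planar cuspidal domain `Ω = {(x,y) : 0 < x < 1, 0 < |y| < x^{1/α}}`. -/
def cuspDomain (α : ℝ) : Set (ℝ × ℝ) :=
  {q : ℝ × ℝ | 0 < q.1 ∧ q.1 < 1 ∧ 0 < |q.2| ∧ |q.2| < q.1 ^ (1 / α)}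

/-- Bernoulli-type estimate: for `0 ≤ t ≤ x ≤ 1` and `p ≥ 1`, `x^p - t^p ≤ p (x - t)`. -/
private lemma rpow_sub_bound {x t p : ℝ} (ht : 0 ≤ t) (htx : t ≤ x) (hx : x ≤ 1) (hp : 1 ≤ p) :
    x ^ p ≤ t ^ p + p * (x - t) := by
  rcases eq_or_lt_of_le (ht.trans htx) with h0 | hx0
  · have hx0 : x = 0 := h0.symm
    have ht0 : t = 0 := le_antisymm (hx0 ▸ htx) ht
    simp [hx0, ht0]
  · have hu0 : 0 ≤ t / x := div_nonneg ht hx0.le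
    have hb := one_add_mul_self_le_rpow_one_add (s := t / x - 1)
      (by linarith : (-1:ℝ) ≤ t / x - 1) hp
    rw [add_sub_cancel] at hb
    have htp : t ^ p = (t / x) ^ p * x ^ p := by
      rw [← Real.mul_rpow hu0 hx0.le, div_mul_cancel₀ _ hx0.ne']
    have hxp_le : x ^ p ≤ x := by
      calc x ^ p ≤ x ^ (1:ℝ) := Real.rpow_le_rpow_of_exponent_ge hx0 hx hp
        _ = x := Real.rpow_one x
    have hxp_pos : 0 < x ^ p := Real.rpow_pos_of_pos hx0 p
    have hu1 : t / x ≤ 1 := div_le_one_of_le₀ htx hx0.le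
    have hxt : (1 - t / x) * x = x - t := by field_simp
    nlinarith [mul_le_mul_of_nonneg_left hb hxp_pos.le,
      mul_le_mul_of_nonneg_left hxp_le (by nlinarith : (0:ℝ) ≤ p * (1 - t / x))]

private lemma measRpowConst (β : ℝ) : Measurable fun x : ℝ => x ^ β := by measurability

private lemma intervalIntegrable_congr_Ioc {f g : ℝ → ℝ} {a c : ℝ} (hac : a ≤ c)
    (h : ∀ y ∈ Ioc a c, f y = g y) (hf : IntervalIntegrable f volume a c) :
    IntervalIntegrable g volume a c := by
  rw [intervalIntegrable_iff_integrableOn_Ioc_of_le hac] at *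
  exact hf.congr_fun h measurableSet_Ioc

/-- Integrability and a uniform integral bound for `|y|^β` on `(-b, b)`. -/
private lemma prof1 {b β : ℝ} (hb : 0 < b) (hb1 : b ≤ 1) (hβ : -1 < β) :
    IntegrableOn (fun y : ℝ => |y| ^ β) (Ioo (-b) b) volume ∧
      ∫ y in Ioo (-b) b, |y| ^ β ≤ 2 / (β + 1) := by
  have hβ1 : (0:ℝ) < β + 1 := by linarith
  have IIpos : IntervalIntegrable (fun y : ℝ => |y| ^ β) volume 0 b := by
    refine intervalIntegrable_congr_Ioc hb.le (fun y hy => ?_)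
      (intervalIntegral.intervalIntegrable_rpow' hβ)
    rw [abs_of_pos hy.1]
  have IIneg : IntervalIntegrable (fun y : ℝ => |y| ^ β) volume (-b) 0 := by
    have h := ((intervalIntegral.intervalIntegrable_rpow' (a := 0) (b := b) hβ).comp_sub_left
      0).symm
    simp only [zero_sub, sub_zero, sub_self] at h
    refine intervalIntegrable_congr_Ioc (by linarith) (fun y hy => ?_) h
    rw [abs_of_nonpos hy.2]
  have hIOn : IntegrableOn (fun y : ℝ => |y| ^ β) (Ioo (-b) b) volume := by
    have h1 := (intervalIntegrable_iff_integrableOn_Ioc_of_le (by linarith : -b ≤ (0:ℝ))).1 IIneg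
    have h2 := (intervalIntegrable_iff_integrableOn_Ioc_of_le hb.le).1 IIpos
    refine (h1.union h2).mono_set (fun y hy => ?_)
    rcases le_or_gt y 0 with h | h
    · exact Or.inl ⟨hy.1, h⟩
    · exact Or.inr ⟨h, hy.2.le⟩
  refine ⟨hIOn, ?_⟩
  have hval : ∫ u in (0:ℝ)..b, u ^ β = b ^ (β + 1) / (β + 1) := by
    rw [integral_rpow (Or.inl hβ), Real.zero_rpow hβ1.ne', sub_zero]
  have e1 : ∫ y in (0:ℝ)..b, |y| ^ β = b ^ (β + 1) / (β + 1) := by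
    rw [← hval]
    refine intervalIntegral.integral_congr (fun y hy => ?_)
    rw [uIcc_of_le hb.le] at hy
    rw [abs_of_nonneg hy.1]
  have e2 : ∫ y in (-b:ℝ)..0, |y| ^ β = b ^ (β + 1) / (β + 1) := by
    have ec : ∫ y in (-b:ℝ)..0, |y| ^ β = ∫ y in (-b:ℝ)..0, (0 - y) ^ β := by
      refine intervalIntegral.integral_congr (fun y hy => ?_)
      rw [uIcc_of_le (by linarith : -b ≤ (0:ℝ))] at hy
      rw [zero_sub, abs_of_nonpos hy.2]
    rw [ec, intervalIntegral.integral_comp_sub_left (fun u : ℝ => u ^ β) 0]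
    simp only [sub_zero, zero_sub, neg_neg]
    exact hval
  have etotal : ∫ y in Ioo (-b) b, |y| ^ β = b ^ (β + 1) / (β + 1) + b ^ (β + 1) / (β + 1) := by
    rw [← integral_Ioc_eq_integral_Ioo,
      ← intervalIntegral.integral_of_le (by linarith : -b ≤ b),
      ← intervalIntegral.integral_add_adjacent_intervals IIneg IIpos, e1, e2]
  rw [etotal]
  have hble : b ^ (β + 1) ≤ 1 := Real.rpow_le_one hb.le hb1 hβ1.le
  rw [← add_div, div_le_div_iff₀ hβ1 hβ1]
  nlinarith

/-- Integrability and a uniform integral bound for `(b - |y|)^β` on `(-b, b)`. -/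
private lemma prof2 {b β : ℝ} (hb : 0 < b) (hb1 : b ≤ 1) (hβ : -1 < β) :
    IntegrableOn (fun y : ℝ => (b - |y|) ^ β) (Ioo (-b) b) volume ∧
      ∫ y in Ioo (-b) b, (b - |y|) ^ β ≤ 2 / (β + 1) := by
  have hβ1 : (0:ℝ) < β + 1 := by linarith
  have IIpos : IntervalIntegrable (fun y : ℝ => (b - |y|) ^ β) volume 0 b := by
    have h := ((intervalIntegral.intervalIntegrable_rpow' (a := 0) (b := b) hβ).comp_sub_left
      b).symm
    simp only [sub_zero, sub_self] at h
    refine intervalIntegrable_congr_Ioc hb.le (fun y hy => ?_) h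
    rw [abs_of_pos hy.1]
  have IIneg : IntervalIntegrable (fun y : ℝ => (b - |y|) ^ β) volume (-b) 0 := by
    have h := (intervalIntegral.intervalIntegrable_rpow' (a := 0) (b := b) hβ).comp_add_right b
    simp only [zero_sub, sub_self] at h
    refine intervalIntegrable_congr_Ioc (by linarith) (fun y hy => ?_) h
    rw [abs_of_nonpos hy.2, sub_neg_eq_add, add_comm]
  have hIOn : IntegrableOn (fun y : ℝ => (b - |y|) ^ β) (Ioo (-b) b) volume := by
    have h1 := (intervalIntegrable_iff_integrableOn_Ioc_of_le (by linarith : -b ≤ (0:ℝ))).1 IIneg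
    have h2 := (intervalIntegrable_iff_integrableOn_Ioc_of_le hb.le).1 IIpos
    refine (h1.union h2).mono_set (fun y hy => ?_)
    rcases le_or_gt y 0 with h | h
    · exact Or.inl ⟨hy.1, h⟩
    · exact Or.inr ⟨h, hy.2.le⟩
  refine ⟨hIOn, ?_⟩
  have hval : ∫ u in (0:ℝ)..b, u ^ β = b ^ (β + 1) / (β + 1) := by
    rw [integral_rpow (Or.inl hβ), Real.zero_rpow hβ1.ne', sub_zero]
  have e1 : ∫ y in (0:ℝ)..b, (b - |y|) ^ β = b ^ (β + 1) / (β + 1) := by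
    have ec : ∫ y in (0:ℝ)..b, (b - |y|) ^ β = ∫ y in (0:ℝ)..b, (b - y) ^ β := by
      refine intervalIntegral.integral_congr (fun y hy => ?_)
      rw [uIcc_of_le hb.le] at hy
      rw [abs_of_nonneg hy.1]
    rw [ec, intervalIntegral.integral_comp_sub_left (fun u : ℝ => u ^ β) b]
    simp only [sub_zero, sub_self]
    exact hval
  have e2 : ∫ y in (-b:ℝ)..0, (b - |y|) ^ β = b ^ (β + 1) / (β + 1) := by
    have ec : ∫ y in (-b:ℝ)..0, (b - |y|) ^ β = ∫ y in (-b:ℝ)..0, (y + b) ^ β := by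
      refine intervalIntegral.integral_congr (fun y hy => ?_)
      rw [uIcc_of_le (by linarith : -b ≤ (0:ℝ))] at hy
      rw [abs_of_nonpos hy.2, sub_neg_eq_add, add_comm]
    rw [ec, intervalIntegral.integral_comp_add_right (fun u : ℝ => u ^ β) b]
    simp only [neg_add_cancel, zero_add]
    exact hval
  have etotal : ∫ y in Ioo (-b) b, (b - |y|) ^ β
      = b ^ (β + 1) / (β + 1) + b ^ (β + 1) / (β + 1) := by
    rw [← integral_Ioc_eq_integral_Ioo,
      ← intervalIntegral.integral_of_le (by linarith : -b ≤ b),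
      ← intervalIntegral.integral_add_adjacent_intervals IIneg IIpos, e1, e2]
  rw [etotal]
  have hble : b ^ (β + 1) ≤ 1 := Real.rpow_le_one hb.le hb1 hβ1.le
  rw [← add_div, div_le_div_iff₀ hβ1 hβ1]
  nlinarith

private lemma cuspDomain_measurableSet (α : ℝ) : MeasurableSet (cuspDomain α) := by
  have h1 : MeasurableSet {q : ℝ × ℝ | 0 < q.1} :=
    measurableSet_lt measurable_const measurable_fst
  have h2 : MeasurableSet {q : ℝ × ℝ | q.1 < 1} :=
    measurableSet_lt measurable_fst measurable_const
  have h3 : MeasurableSet {q : ℝ × ℝ | 0 < |q.2|} :=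
    measurableSet_lt measurable_const measurable_snd.abs
  have h4 : MeasurableSet {q : ℝ × ℝ | |q.2| < q.1 ^ (1 / α)} := by
    refine measurableSet_lt measurable_snd.abs ?_
    exact (measRpowConst (1/α)).comp measurable_fst
  exact (h1.inter (h2.inter (h3.inter h4)))

/-- Fubini-type integrability criterion on the cusp domain. -/
private lemma cusp_fubini (α : ℝ) (hα : 0 < α) (g : ℝ × ℝ → ℝ) (hg : Measurable g)
    (C : ℝ → ℝ) (hC : IntegrableOn C (Ioo (0:ℝ) 1) volume)
    (hgint : ∀ x ∈ Ioo (0:ℝ) 1,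
      IntegrableOn (fun y => g (x, y)) (Ioo (-(x ^ (1/α))) (x ^ (1/α))) volume)
    (hgpos : ∀ x ∈ Ioo (0:ℝ) 1, ∀ y ∈ Ioo (-(x ^ (1/α))) (x ^ (1/α)), 0 ≤ g (x, y))
    (hbound : ∀ x ∈ Ioo (0:ℝ) 1,
      ∫ y in Ioo (-(x ^ (1/α))) (x ^ (1/α)), g (x, y) ≤ C x) :
    IntegrableOn g (cuspDomain α) volume := by
  have hΩ : MeasurableSet (cuspDomain α) := cuspDomain_measurableSet α
  rw [← integrable_indicator_iff hΩ]
  set F := (cuspDomain α).indicator g with hF_def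
  -- fiber description
  have hfiber : ∀ x : ℝ, x ∈ Ioo (0:ℝ) 1 →
      (fun y => F (x, y)) =
        (Ioo (-(x ^ (1/α))) (x ^ (1/α)) \ {0}).indicator (fun y => g (x, y)) := by
    intro x hx
    funext y
    have hmem : (x, y) ∈ cuspDomain α ↔ y ∈ Ioo (-(x ^ (1/α))) (x ^ (1/α)) \ {0} := by
      simp only [cuspDomain, mem_setOf_eq, mem_diff, mem_Ioo, mem_singleton_iff]
      constructor
      · rintro ⟨_, _, hy0, hyb⟩
        rcases abs_lt.1 hyb with ⟨h1, h2⟩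
        exact ⟨⟨h1, h2⟩, abs_pos.1 hy0⟩
      · rintro ⟨⟨h1, h2⟩, h0⟩
        exact ⟨hx.1, hx.2, abs_pos.2 h0, abs_lt.2 ⟨h1, h2⟩⟩
    by_cases h : (x, y) ∈ cuspDomain α
    · rw [hF_def, indicator_of_mem h, indicator_of_mem (hmem.1 h)]
    · rw [hF_def, indicator_of_notMem h, indicator_of_notMem (fun hc => h (hmem.2 hc))]
  have hfiber0 : ∀ x : ℝ, x ∉ Ioo (0:ℝ) 1 → (fun y => F (x, y)) = fun _ => (0:ℝ) := by
    intro x hx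
    funext y
    refine indicator_of_notMem (fun hc => hx ⟨hc.1, hc.2.1⟩) _
  have hFpos : ∀ q, 0 ≤ F q := by
    intro q
    rcases eq_or_ne (F q) 0 with h | h
    · rw [h]
    · have hm : q ∈ cuspDomain α := by
        by_contra hc
        exact h (indicator_of_notMem hc _)
      rw [hF_def, indicator_of_mem hm]
      have hx : q.1 ∈ Ioo (0:ℝ) 1 := ⟨hm.1, hm.2.1⟩
      have hy : q.2 ∈ Ioo (-(q.1 ^ (1/α))) (q.1 ^ (1/α)) := by
        rcases abs_lt.1 hm.2.2.2 with ⟨h1, h2⟩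
        exact ⟨h1, h2⟩
      have := hgpos q.1 hx q.2 hy
      simpa using this
  have hFmeas : AEStronglyMeasurable F (volume.prod volume) :=
    ((hg.indicator hΩ).aestronglyMeasurable)
  rw [show (volume : Measure (ℝ × ℝ)) = (volume : Measure ℝ).prod volume from
    MeasureTheory.Measure.volume_eq_prod ℝ ℝ]
  refine (integrable_prod_iff hFmeas).2 ⟨?_, ?_⟩
  · refine Filter.Eventually.of_forall (fun x => ?_)
    by_cases hx : x ∈ Ioo (0:ℝ) 1
    · rw [hfiber x hx]
      have hS : MeasurableSet (Ioo (-(x ^ (1/α))) (x ^ (1/α)) \ ({0} : Set ℝ)) :=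
        measurableSet_Ioo.diff (measurableSet_singleton 0)
      rw [integrable_indicator_iff hS]
      exact (hgint x hx).mono_set diff_subset
    · rw [hfiber0 x hx]
      exact integrable_zero _ _ _
  · have hG : Integrable ((Ioo (0:ℝ) 1).indicator C) volume :=
      (integrable_indicator_iff measurableSet_Ioo).2 hC
    refine Integrable.mono' hG (hFmeas.norm.integral_prod_right') ?_
    refine Filter.Eventually.of_forall (fun x => ?_)
    have hnn : (0:ℝ) ≤ ∫ y, ‖F (x, y)‖ := integral_nonneg (fun y => norm_nonneg _)
    rw [Real.norm_of_nonneg hnn]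
    by_cases hx : x ∈ Ioo (0:ℝ) 1
    · have hnorm : (fun y => ‖F (x, y)‖) = fun y => F (x, y) := by
        funext y; exact Real.norm_of_nonneg (hFpos _)
      rw [hnorm, hfiber x hx, indicator_of_mem hx,
        MeasureTheory.integral_indicator (measurableSet_Ioo.diff (measurableSet_singleton 0))]
      calc ∫ y in Ioo (-(x ^ (1/α))) (x ^ (1/α)) \ {0}, g (x, y)
          ≤ ∫ y in Ioo (-(x ^ (1/α))) (x ^ (1/α)), g (x, y) := by
            refine setIntegral_mono_set (hgint x hx) ?_ (HasSubset.Subset.eventuallyLE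
              diff_subset)
            exact (ae_restrict_iff' measurableSet_Ioo).2
              (Filter.Eventually.of_forall (fun y hy => hgpos x hx y hy))
        _ ≤ C x := hbound x hx
    · have hz : ∀ y : ℝ, F (x, y) = 0 := fun y => congrFun (hfiber0 x hx) y
      have hz' : (fun y => ‖F (x, y)‖) = fun _ => (0:ℝ) := funext fun y => by
        rw [hz y, norm_zero]
      rw [hz', integral_zero, indicator_of_notMem hx]
  -- done

set_option maxHeartbeats 2000000 in
/-- On the cusp domain `Ω` with `0 < α ≤ 1`, for every `β > −1` the power `d^β` of the
distance to the boundary is integrable over `Ω`. -/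
theorem integrable_dist_rpow_cusp (α : ℝ) (hα : 0 < α) (hα1 : α ≤ 1)
    (β : ℝ) (hβ : -1 < β) :
    IntegrableOn
      (fun q : ℝ × ℝ => Metric.infDist q (frontier (cuspDomain α)) ^ β)
      (cuspDomain α) volume := by
  have hΩ : MeasurableSet (cuspDomain α) := cuspDomain_measurableSet α
  have hp0 : (0:ℝ) < 1 / α := by positivity
  have hp1 : (1:ℝ) ≤ 1 / α := by rw [le_div_iff₀ hα]; linarith
  have hfmeas : Measurable fun q : ℝ × ℝ =>
      Metric.infDist q (frontier (cuspDomain α)) ^ β :=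
    (measRpowConst β).comp
      (Metric.continuous_infDist_pt _).measurable
  -- the frontier is nonempty
  have hne : (cuspDomain α).Nonempty := by
    refine ⟨((1:ℝ)/2, ((1:ℝ)/2) ^ (1/α) / 2), ?_, ?_, ?_, ?_⟩
    · norm_num
    · norm_num
    · have h2 : (0:ℝ) < ((1:ℝ)/2) ^ (1/α) := Real.rpow_pos_of_pos (by norm_num) _
      have hpos : (0:ℝ) < ((1:ℝ)/2) ^ (1/α) / 2 := by positivity
      show (0:ℝ) < |((1:ℝ)/2) ^ (1/α) / 2|
      rw [abs_of_pos hpos]; exact hpos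
    · have h2 : (0:ℝ) < ((1:ℝ)/2) ^ (1/α) := Real.rpow_pos_of_pos (by norm_num) _
      have hpos : (0:ℝ) < ((1:ℝ)/2) ^ (1/α) / 2 := by positivity
      show |((1:ℝ)/2) ^ (1/α) / 2| < ((1:ℝ)/2) ^ (1/α)
      rw [abs_of_pos hpos]; exact half_lt_self h2
  have hfr : (frontier (cuspDomain α)).Nonempty := by
    rw [nonempty_iff_ne_empty]
    intro h
    rcases isClopen_iff.1 (isClopen_iff_frontier_eq_empty.2 h) with h1 | h1
    · exact hne.ne_empty h1
    · have : ((0:ℝ), (0:ℝ)) ∈ cuspDomain α := h1 ▸ mem_univ _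
      exact lt_irrefl (0:ℝ) this.1
  -- the key lower bound on the distance to the frontier
  set c : ℝ := 1 / (2 * (1 + 1/α)) with hc_def
  have hc0 : 0 < c := by positivity
  have hc1 : c < 1 := by
    rw [hc_def, div_lt_one (by positivity)]; linarith
  have hc_eq : c * (1 + 1/α) = 1/2 := by
    rw [hc_def]; field_simp
  have key : ∀ q ∈ cuspDomain α,
      c * min (min |q.2| (q.1 ^ (1/α) - |q.2|)) (1 - q.1)
        ≤ Metric.infDist q (frontier (cuspDomain α)) := by
    rintro ⟨x, y⟩ ⟨hx0, hx1, hy0, hyb⟩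
    dsimp only at hx0 hx1 hy0 hyb ⊢
    set m : ℝ := min (min |y| (x ^ (1/α) - |y|)) (1 - x) with hm_def
    have hs0 : 0 < x ^ (1/α) - |y| := sub_pos.2 hyb
    have hm0 : 0 < m := lt_min (lt_min hy0 hs0) (by linarith)
    have hma : m ≤ |y| := (min_le_left _ _).trans (min_le_left _ _)
    have hms : m ≤ x ^ (1/α) - |y| := (min_le_left _ _).trans (min_le_right _ _)
    have hmw : m ≤ 1 - x := min_le_right _ _
    have hbx : x ^ (1/α) ≤ x := by
      calc x ^ (1/α) ≤ x ^ (1:ℝ) := Real.rpow_le_rpow_of_exponent_ge hx0 hx1.le hp1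
        _ = x := Real.rpow_one x
    have hra : c * m < |y| := by
      nlinarith [mul_le_mul_of_nonneg_left hma hc0.le, mul_pos (sub_pos.2 hc1) hy0]
    have hrw : c * m < 1 - x := by
      nlinarith [mul_le_mul_of_nonneg_left hmw hc0.le,
        mul_pos (sub_pos.2 hc1) (show (0:ℝ) < 1 - x by linarith)]
    by_contra hcon
    push_neg at hcon
    obtain ⟨z, hzf, hzd⟩ := (Metric.infDist_lt_iff hfr).1 hcon
    have hball : Metric.ball (x, y) (c * m) ⊆ cuspDomain α := by
      rintro ⟨u, v⟩ hz'
      rw [Metric.mem_ball, Prod.dist_eq, max_lt_iff] at hz'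
      obtain ⟨h1, h2⟩ := hz'
      rw [Real.dist_eq] at h1 h2
      have h1' := abs_lt.1 h1
      have h2' := abs_lt.1 h2
      have htri1 : |y| - |v| ≤ |v - y| := by
        have := abs_sub_abs_le_abs_sub y v
        have habs : |y - v| = |v - y| := abs_sub_comm y v
        linarith
      have htri2 : |v| - |y| ≤ |v - y| := abs_sub_abs_le_abs_sub v y
      have h5 : x - c * m ≤ u := by linarith
      have h6 : 0 ≤ x - c * m := by linarith
      have h7 : (x - c * m) ^ (1/α) ≤ u ^ (1/α) :=
        Real.rpow_le_rpow h6 h5 hp0.le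
      have h8 : x ^ (1/α) ≤ (x - c * m) ^ (1/α) + (1/α) * (c * m) := by
        have h := rpow_sub_bound (x := x) (t := x - c * m) h6 (by linarith) hx1.le hp1
        have he : x - (x - c * m) = c * m := by ring
        rwa [he] at h
      have hfin : c * m * (1 + 1/α) < x ^ (1/α) - |y| := by
        have he : c * m * (1 + 1/α) = m * (c * (1 + 1/α)) := by ring
        rw [he, hc_eq]
        linarith
      refine ⟨by dsimp only; linarith, by dsimp only; linarith, ?_, ?_⟩
      · dsimp only; linarith
      · dsimp only; linarith
    exact hzf.2 (interior_maximal hball Metric.isOpen_ball (Metric.mem_ball'.2 hzd))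
  rcases le_or_gt 0 β with hβ0 | hβ0
  · -- easy case `β ≥ 0`: the distance is bounded
    obtain ⟨z, hzf⟩ := hfr
    have hsub : cuspDomain α ⊆ Icc (0:ℝ) 1 ×ˢ Icc (-1:ℝ) 1 := by
      rintro ⟨x, y⟩ ⟨hx0, hx1, _, hyb⟩
      have hb1 : x ^ (1/α) ≤ 1 := Real.rpow_le_one hx0.le hx1.le hp0.le
      have hy1 : |y| ≤ 1 := le_trans hyb.le hb1
      obtain ⟨hy1a, hy1b⟩ := abs_le.1 hy1
      exact ⟨⟨hx0.le, hx1.le⟩, ⟨hy1a, hy1b⟩⟩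
    have hzmem : z ∈ Icc (0:ℝ) 1 ×ˢ Icc (-1:ℝ) 1 :=
      closure_minimal hsub (isClosed_Icc.prod isClosed_Icc) (frontier_subset_closure hzf)
    refine Integrable.mono' (g := fun _ => (2:ℝ) ^ β) ?_ hfmeas.aestronglyMeasurable ?_
    · refine integrableOn_const (lt_top_iff_ne_top.1 ?_)
      calc volume (cuspDomain α) ≤ volume (Icc (0:ℝ) 1 ×ˢ Icc (-1:ℝ) 1) :=
            measure_mono hsub
        _ < ⊤ := by
            rw [MeasureTheory.Measure.volume_eq_prod, Measure.prod_prod, Real.volume_Icc,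
              Real.volume_Icc]
            exact ENNReal.mul_lt_top ENNReal.ofReal_lt_top ENNReal.ofReal_lt_top
    · refine (ae_restrict_iff' hΩ).2 (Filter.Eventually.of_forall ?_)
      intro q hq
      have hqmem := hsub hq
      have hd2 : Metric.infDist q (frontier (cuspDomain α)) ≤ 2 := by
        refine le_trans (Metric.infDist_le_dist_of_mem hzf) ?_
        rw [Prod.dist_eq]
        have e1 := hqmem.1.1; have e2 := hqmem.1.2
        have e3 := hqmem.2.1; have e4 := hqmem.2.2
        have f1 := hzmem.1.1; have f2 := hzmem.1.2
        have f3 := hzmem.2.1; have f4 := hzmem.2.2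
        refine max_le ?_ ?_ <;> rw [Real.dist_eq, abs_le] <;> constructor <;> linarith
      have hnn : 0 ≤ Metric.infDist q (frontier (cuspDomain α)) := Metric.infDist_nonneg
      rw [Real.norm_of_nonneg (Real.rpow_nonneg hnn β)]
      exact Real.rpow_le_rpow hnn hd2 hβ0
  · -- hard case `β < 0`
    have hb_pos : ∀ x ∈ Ioo (0:ℝ) 1, 0 < x ^ (1/α) :=
      fun x hx => Real.rpow_pos_of_pos hx.1 _
    have hb_le1 : ∀ x ∈ Ioo (0:ℝ) 1, x ^ (1/α) ≤ 1 :=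
      fun x hx => Real.rpow_le_one hx.1.le hx.2.le hp0.le
    have hconst : IntegrableOn (fun _ : ℝ => 2/(β+1)) (Ioo (0:ℝ) 1) volume :=
      integrableOn_const (lt_top_iff_ne_top.1 (by simp [Real.volume_Ioo]))
    have I1 : IntegrableOn (fun q : ℝ × ℝ => |q.2| ^ β) (cuspDomain α) volume := by
      refine cusp_fubini α hα _ ?_ (fun _ => 2/(β+1)) hconst ?_ ?_ ?_
      · exact (measRpowConst β).comp measurable_snd.abs
      · exact fun x hx => (prof1 (hb_pos x hx) (hb_le1 x hx) hβ).1
      · exact fun x _ y _ => Real.rpow_nonneg (abs_nonneg _) β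
      · exact fun x hx => (prof1 (hb_pos x hx) (hb_le1 x hx) hβ).2
    have I2 : IntegrableOn (fun q : ℝ × ℝ => (q.1 ^ (1/α) - |q.2|) ^ β)
        (cuspDomain α) volume := by
      refine cusp_fubini α hα _ ?_ (fun _ => 2/(β+1)) hconst ?_ ?_ ?_
      · refine Measurable.comp (measRpowConst β) ?_
        exact ((measRpowConst (1/α)).comp
          measurable_fst).sub measurable_snd.abs
      · exact fun x hx => (prof2 (hb_pos x hx) (hb_le1 x hx) hβ).1
      · intro x hx y hy
        refine Real.rpow_nonneg ?_ β
        have := abs_lt.2 ⟨hy.1, hy.2⟩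
        linarith
      · exact fun x hx => (prof2 (hb_pos x hx) (hb_le1 x hx) hβ).2
    have I3 : IntegrableOn (fun q : ℝ × ℝ => (1 - q.1) ^ β) (cuspDomain α) volume := by
      refine cusp_fubini α hα _ ?_ (fun x => 2 * (1 - x) ^ β) ?_ ?_ ?_ ?_
      · exact (measRpowConst β).comp
          (measurable_const.sub measurable_fst)
      · have h := ((intervalIntegral.intervalIntegrable_rpow' (a := 0) (b := 1)
          hβ).comp_sub_left 1).symm
        norm_num at h
        have h2 := (intervalIntegrable_iff_integrableOn_Ioc_of_le
          (by norm_num : (0:ℝ) ≤ 1)).1 h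
        exact (h2.mono_set Ioo_subset_Ioc_self).const_mul 2
      · intro x hx
        show IntegrableOn (fun _ : ℝ => (1 - x) ^ β) (Ioo (-(x^(1/α))) (x^(1/α))) volume
        refine integrableOn_const (lt_top_iff_ne_top.1 ?_)
        simp [Real.volume_Ioo]
      · intro x hx y _
        exact Real.rpow_nonneg (by linarith [hx.2]) β
      · intro x hx
        show (∫ _ in Ioo (-(x^(1/α))) (x^(1/α)), (1 - x) ^ β) ≤ 2 * (1 - x) ^ β
        rw [setIntegral_const, measureReal_def, Real.volume_Ioo, smul_eq_mul]
        have hbp := hb_pos x hx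
        have htr : (ENNReal.ofReal (x^(1/α) - -(x^(1/α)))).toReal = 2 * x^(1/α) := by
          rw [ENNReal.toReal_ofReal (by linarith)]; ring
        rw [htr]
        have h1 : x ^ (1/α) ≤ 1 := hb_le1 x hx
        have h2 : 0 ≤ (1-x)^β := Real.rpow_nonneg (by linarith [hx.2]) β
        nlinarith
    have hItot : IntegrableOn (fun q : ℝ × ℝ =>
        c ^ β * (|q.2| ^ β + (q.1 ^ (1/α) - |q.2|) ^ β + (1 - q.1) ^ β))
        (cuspDomain α) volume := ((I1.add I2).add I3).const_mul _
    refine Integrable.mono' hItot hfmeas.aestronglyMeasurable ?_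
    refine (ae_restrict_iff' hΩ).2 (Filter.Eventually.of_forall ?_)
    intro q hq
    obtain ⟨hx0, hx1, hy0, hyb⟩ := hq
    have hs0 : 0 < q.1 ^ (1/α) - |q.2| := sub_pos.2 hyb
    have hm0 : 0 < min (min |q.2| (q.1 ^ (1/α) - |q.2|)) (1 - q.1) :=
      lt_min (lt_min hy0 hs0) (by linarith)
    have hd := key q ⟨hx0, hx1, hy0, hyb⟩
    rw [Real.norm_of_nonneg (Real.rpow_nonneg Metric.infDist_nonneg β)]
    have h1 : Metric.infDist q (frontier (cuspDomain α)) ^ β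
        ≤ (c * min (min |q.2| (q.1 ^ (1/α) - |q.2|)) (1 - q.1)) ^ β :=
      Real.rpow_le_rpow_of_nonpos (mul_pos hc0 hm0) hd hβ0.le
    have h2 : (c * min (min |q.2| (q.1 ^ (1/α) - |q.2|)) (1 - q.1)) ^ β
        = c ^ β * (min (min |q.2| (q.1 ^ (1/α) - |q.2|)) (1 - q.1)) ^ β :=
      Real.mul_rpow hc0.le hm0.le
    have n1 : 0 ≤ |q.2| ^ β := Real.rpow_nonneg (abs_nonneg _) β
    have n2 : 0 ≤ (q.1 ^ (1/α) - |q.2|) ^ β := Real.rpow_nonneg hs0.le β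
    have n3 : 0 ≤ (1 - q.1) ^ β := Real.rpow_nonneg (by linarith) β
    have h3 : (min (min |q.2| (q.1 ^ (1/α) - |q.2|)) (1 - q.1)) ^ β
        ≤ |q.2| ^ β + (q.1 ^ (1/α) - |q.2|) ^ β + (1 - q.1) ^ β := by
      rcases min_cases (min |q.2| (q.1 ^ (1/α) - |q.2|)) (1 - q.1) with ⟨he, _⟩ | ⟨he, _⟩
      · rcases min_cases |q.2| (q.1 ^ (1/α) - |q.2|) with ⟨he2, _⟩ | ⟨he2, _⟩ <;>
          rw [he, he2] <;> linarith
      · rw [he]; linarith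
    have hcb : 0 ≤ c ^ β := Real.rpow_nonneg hc0.le β
    calc Metric.infDist q (frontier (cuspDomain α)) ^ β
        ≤ c ^ β * (min (min |q.2| (q.1 ^ (1/α) - |q.2|)) (1 - q.1)) ^ β := by
          rw [← h2]; exact h1
      _ ≤ c ^ β * (|q.2| ^ β + (q.1 ^ (1/α) - |q.2|) ^ β + (1 - q.1) ^ β) :=
          mul_le_mul_of_nonneg_left h3 hcb
end

section
/- Let F ⊂ ℝⁿ be compact and nonempty, and consider a Whitney decomposition of ℝⁿ \ F into dyadic cubes Q with ℓ(Q) ≤ d(Q, F) ≤ 4ℓ(Q), where ℓ(Q) denotes the diameter of Q. If F is an m-set (i.e., C⁻¹rᵐ < H^m(B(x,r) ∩ F) < Crᵐ for all x ∈ F and 0 < r ≤ diam F), then for every x₀ ∈ F and 0 < R < diam(F)/3, the number of Whitney cubes of generation k (edge length 2^{−k}) contained in B(x₀, R) is at most C' Rᵐ 2^{km}, with C' depending only on F and n. -/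
open MeasureTheory ENNReal
set_option maxHeartbeats 1000000

/-- `F` is an m-set with constant `C`: `C⁻¹ rᵐ < H^m(B(x,r) ∩ F) < C rᵐ` for every
`x ∈ F` and `0 < r ≤ diam F`. -/
def IsMSet {n : ℕ} (m : ℝ) (C : ℝ) (F : Set (EuclideanSpace ℝ (Fin n))) : Prop :=
  0 < C ∧ ∀ x ∈ F, ∀ r : ℝ, 0 < r → r ≤ Metric.diam F →
    ENNReal.ofReal (C⁻¹ * r ^ m) < μH[m] (Metric.ball x r ∩ F) ∧
    μH[m] (Metric.ball x r ∩ F) < ENNReal.ofReal (C * r ^ m)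

/-- The closed dyadic cube of generation `k` (edge length `2^{−k}`) with lower corner
`2^{−k}·a`. -/
def dyadicCube {n : ℕ} (k : ℤ) (a : Fin n → ℤ) : Set (EuclideanSpace ℝ (Fin n)) :=
  {x | ∀ i, (a i : ℝ) * (2 : ℝ) ^ (-k) ≤ x i ∧ x i ≤ ((a i : ℝ) + 1) * (2 : ℝ) ^ (-k)}

/-- Distance between two sets. -/
noncomputable def setDist {X : Type*} [PseudoMetricSpace X] (A B : Set X) : ℝ :=
  sInf {d | ∃ a ∈ A, ∃ b ∈ B, d = dist a b}

/-- A dyadic cube `Q` is a Whitney cube for `F` if `ℓ(Q) ≤ dist(Q,F) ≤ 4ℓ(Q)`, where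
`ℓ(Q)` is the diameter of `Q`. -/
def IsWhitneyCube {n : ℕ} (F Q : Set (EuclideanSpace ℝ (Fin n))) : Prop :=
  Metric.diam Q ≤ setDist Q F ∧ setDist Q F ≤ 4 * Metric.diam Q

lemma coord_le_dist {n : ℕ} (x y : EuclideanSpace ℝ (Fin n)) (i : Fin n) :
    |x i - y i| ≤ dist x y := by
  rw [EuclideanSpace.dist_eq]
  have h1 : |x i - y i| = Real.sqrt (dist (x i) (y i) ^ 2) := by
    rw [Real.sqrt_sq_eq_abs, Real.dist_eq, abs_abs]
  rw [h1]
  apply Real.sqrt_le_sqrt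
  exact Finset.single_le_sum (f := fun j => dist (x j) (y j) ^ 2)
    (fun j _ => sq_nonneg _) (Finset.mem_univ i)

lemma dist_le_of_coord {n : ℕ} (x y : EuclideanSpace ℝ (Fin n)) (c : ℝ) (hc : 0 ≤ c)
    (h : ∀ i, |x i - y i| ≤ c) : dist x y ≤ Real.sqrt n * c := by
  rw [EuclideanSpace.dist_eq]
  have h2 : ∑ i : Fin n, dist (x i) (y i) ^ 2 ≤ (n : ℝ) * c ^ 2 := by
    calc ∑ i : Fin n, dist (x i) (y i) ^ 2 ≤ ∑ _i : Fin n, c ^ 2 := by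
          apply Finset.sum_le_sum
          intro j _
          apply pow_le_pow_left₀ dist_nonneg
          rw [Real.dist_eq]; exact h j
      _ = (n : ℝ) * c ^ 2 := by simp [Finset.sum_const, mul_comm]
  calc Real.sqrt (∑ i : Fin n, dist (x i) (y i) ^ 2) ≤ Real.sqrt ((n : ℝ) * c ^ 2) :=
        Real.sqrt_le_sqrt h2
    _ = Real.sqrt n * c := by
        rw [Real.sqrt_mul (Nat.cast_nonneg n), Real.sqrt_sq hc]


noncomputable def corner {n : ℕ} (k : ℤ) (a : Fin n → ℤ) : EuclideanSpace ℝ (Fin n) :=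
  WithLp.toLp 2 (fun i => (a i : ℝ) * (2 : ℝ) ^ (-k))

lemma corner_apply {n : ℕ} (k : ℤ) (a : Fin n → ℤ) (i : Fin n) :
    corner k a i = (a i : ℝ) * (2 : ℝ) ^ (-k) := rfl

lemma corner_mem {n : ℕ} (k : ℤ) (a : Fin n → ℤ) : corner k a ∈ dyadicCube k a := by
  intro i
  constructor
  · exact le_refl _
  · have : (0:ℝ) < (2:ℝ) ^ (-k) := by positivity
    rw [corner_apply]
    nlinarith

lemma cube_coord_dist {n : ℕ} (k : ℤ) (a : Fin n → ℤ) {x y : EuclideanSpace ℝ (Fin n)}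
    (hx : x ∈ dyadicCube k a) (hy : y ∈ dyadicCube k a) (i : Fin n) :
    |x i - y i| ≤ (2:ℝ) ^ (-k) := by
  obtain ⟨h1, h2⟩ := hx i
  obtain ⟨h3, h4⟩ := hy i
  rw [abs_le]
  constructor <;> nlinarith

lemma cube_diam_le {n : ℕ} (k : ℤ) (a : Fin n → ℤ) :
    Metric.diam (dyadicCube k a) ≤ Real.sqrt n * (2:ℝ) ^ (-k) := by
  apply Metric.diam_le_of_forall_dist_le (by positivity)
  intro x hx y hy
  exact dist_le_of_coord x y _ (by positivity) (fun i => cube_coord_dist k a hx hy i)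

lemma cube_bounded {n : ℕ} (k : ℤ) (a : Fin n → ℤ) :
    Bornology.IsBounded (dyadicCube k a) := by
  apply Bornology.IsBounded.subset (Metric.isBounded_closedBall
    (x := corner k a) (r := Real.sqrt n * (2:ℝ) ^ (-k)))
  intro x hx
  rw [Metric.mem_closedBall]
  exact dist_le_of_coord x (corner k a) _ (by positivity)
    (fun i => cube_coord_dist k a hx (corner_mem k a) i)

lemma le_cube_diam {n : ℕ} (hn : 1 ≤ n) (k : ℤ) (a : Fin n → ℤ) :
    (2:ℝ) ^ (-k) ≤ Metric.diam (dyadicCube k a) := by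
  set ℓ : ℝ := (2:ℝ) ^ (-k) with hℓdef
  have hℓ : 0 < ℓ := by positivity
  set i0 : Fin n := ⟨0, hn⟩
  set c := corner k a
  set c' : EuclideanSpace ℝ (Fin n) := WithLp.toLp 2 (Function.update c i0 ((a i0 : ℝ) * ℓ + ℓ)) with hc'
  have hc'mem : c' ∈ dyadicCube k a := by
    intro i
    by_cases h : i = i0
    · subst h
      rw [hc']
      simp only [PiLp.toLp_apply, Function.update_self]
      constructor
      · linarith
      · rw [add_mul, one_mul]
    · rw [hc']
      simp only [PiLp.toLp_apply, Function.update_of_ne h]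
      exact corner_mem k a i
  have hdist : dist c c' = ℓ := by
    rw [EuclideanSpace.dist_eq]
    have : ∑ i : Fin n, dist (c i) (c' i) ^ 2 = ℓ ^ 2 := by
      rw [Finset.sum_eq_single i0]
      · rw [hc']
        simp only [PiLp.toLp_apply, Function.update_self]
        rw [Real.dist_eq]
        have : c i0 - ((a i0 : ℝ) * ℓ + ℓ) = -ℓ := by
          show corner k a i0 - _ = _
          rw [corner_apply]; ring
        rw [this, abs_neg, abs_of_pos hℓ]
      · intro j _ hj
        rw [hc']
        simp only [PiLp.toLp_apply, Function.update_of_ne hj]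
        simp
      · intro h; exact absurd (Finset.mem_univ i0) h
    rw [this, Real.sqrt_sq hℓ.le]
  rw [← hdist]
  exact Metric.dist_le_diam_of_mem (cube_bounded k a) (corner_mem k a) hc'mem


lemma setDist_bddBelow {X : Type*} [PseudoMetricSpace X] (A B : Set X) :
    BddBelow {d | ∃ a ∈ A, ∃ b ∈ B, d = dist a b} := by
  refine ⟨0, fun d hd => ?_⟩
  obtain ⟨a, _, b, _, rfl⟩ := hd
  exact dist_nonneg

lemma setDist_le_dist {X : Type*} [PseudoMetricSpace X] {A B : Set X} {a b : X}
    (ha : a ∈ A) (hb : b ∈ B) : setDist A B ≤ dist a b :=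
  csInf_le (setDist_bddBelow A B) ⟨a, ha, b, hb, rfl⟩

lemma setDist_exists_lt {X : Type*} [PseudoMetricSpace X] {A B : Set X}
    (hA : A.Nonempty) (hB : B.Nonempty) {ε : ℝ} (hε : 0 < ε) :
    ∃ a ∈ A, ∃ b ∈ B, dist a b < setDist A B + ε := by
  obtain ⟨a0, ha0⟩ := hA
  obtain ⟨b0, hb0⟩ := hB
  have hne : {d | ∃ a ∈ A, ∃ b ∈ B, d = dist a b}.Nonempty := ⟨_, a0, ha0, b0, hb0, rfl⟩
  obtain ⟨d, hd, hlt⟩ := exists_lt_of_csInf_lt hne (lt_add_of_pos_right (setDist A B) hε)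
  obtain ⟨a, ha, b, hb, rfl⟩ := hd
  exact ⟨a, ha, b, hb, hlt⟩

-- finiteness of Hausdorff measure of an m-set
lemma mset_finite {n : ℕ} {m C : ℝ} {F : Set (EuclideanSpace ℝ (Fin n))}
    (hFc : IsCompact F)
    (hd : 0 < Metric.diam F)
    (hFm : ∀ x ∈ F, ∀ r : ℝ, 0 < r → r ≤ Metric.diam F →
      ENNReal.ofReal (C⁻¹ * r ^ m) < μH[m] (Metric.ball x r ∩ F) ∧
      μH[m] (Metric.ball x r ∩ F) < ENNReal.ofReal (C * r ^ m)) :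
    μH[m] F ≠ ⊤ := by
  obtain ⟨t, ht⟩ := hFc.elim_finite_subcover
    (fun x : F => Metric.ball (x : EuclideanSpace ℝ (Fin n)) (Metric.diam F))
    (fun _ => Metric.isOpen_ball)
    (fun y hy => Set.mem_iUnion.2 ⟨⟨y, hy⟩, Metric.mem_ball_self hd⟩)
  have hsub : F ⊆ ⋃ x ∈ t, (Metric.ball (x : EuclideanSpace ℝ (Fin n)) (Metric.diam F) ∩ F) := by
    intro y hy
    obtain ⟨x, hx1, hx2⟩ := Set.mem_iUnion₂.1 (ht hy)
    exact Set.mem_iUnion₂.2 ⟨x, hx1, hx2, hy⟩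
  have : μH[m] F ≤ ∑ x ∈ t, μH[m] (Metric.ball (x : EuclideanSpace ℝ (Fin n)) (Metric.diam F) ∩ F) :=
    le_trans (measure_mono hsub) (measure_biUnion_finset_le t _)
  refine ne_top_of_le_ne_top ?_ this
  refine (ENNReal.sum_lt_top.2 fun x _ => ?_).ne
  exact lt_trans ((hFm x x.2 (Metric.diam F) hd le_rfl).2) ENNReal.ofReal_lt_top

-- lattice box counting
lemma lattice_count {n : ℕ} (s : Finset (Fin n → ℤ)) (b : Fin n → ℤ) (T : ℤ) (hT : 0 ≤ T)
    (h : ∀ a ∈ s, ∀ i, |a i - b i| ≤ T) : s.card ≤ (2 * T + 1).toNat ^ n := by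
  classical
  have hsub : s ⊆ Fintype.piFinset (fun i => Finset.Icc (b i - T) (b i + T)) := by
    intro a ha
    rw [Fintype.mem_piFinset]
    intro i
    rw [Finset.mem_Icc]
    have := h a ha i
    rw [abs_le] at this
    omega
  calc s.card ≤ (Fintype.piFinset (fun i => Finset.Icc (b i - T) (b i + T))).card :=
        Finset.card_le_card hsub
    _ = (2 * T + 1).toNat ^ n := by
        rw [Fintype.card_piFinset]
        have : ∀ i : Fin n, (Finset.Icc (b i - T) (b i + T)).card = (2 * T + 1).toNat := by
          intro i; rw [Int.card_Icc]; congr 1; ring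
        simp [this]

/-- If `F ⊂ ℝⁿ` is a compact nonempty m-set, then for `x₀ ∈ F` and `0 < R < diam F / 3`,
the number of Whitney cubes of generation `k` contained in `B(x₀, R)` is at most
`C' Rᵐ 2^{km}`, with `C'` depending only on `F` and `n`. -/
theorem whitney_cube_count {n : ℕ} (m C : ℝ) (hm : 0 < m) (hmn : m ≤ n)
    (F : Set (EuclideanSpace ℝ (Fin n))) (hFc : IsCompact F) (hFne : F.Nonempty)
    (hF : IsMSet m C F) :
    ∃ C' : ℝ, 0 < C' ∧ ∀ x₀ ∈ F, ∀ R : ℝ, 0 < R → R < Metric.diam F / 3 → ∀ k : ℤ,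
      ((({a : Fin n → ℤ | dyadicCube k a ⊆ Metric.ball x₀ R ∧
          IsWhitneyCube F (dyadicCube k a)}).ncard : ℝ))
        ≤ C' * R ^ m * (2 : ℝ) ^ ((k : ℝ) * m) := by
  classical
  obtain ⟨hC, hFm⟩ := hF
  rcases le_or_gt (Metric.diam F) 0 with hd0 | hd
  · refine ⟨1, one_pos, fun x₀ hx R hR hR3 k => ?_⟩
    linarith
  -- diam F > 0 so n ≥ 1
  have hn : 1 ≤ n := by
    by_contra h
    have hn0 : n = 0 := by omega
    subst hn0
    haveI : Subsingleton (EuclideanSpace ℝ (Fin 0)) := ⟨fun a b => PiLp.ext fun i => (i : Fin 0).elim0⟩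
    have := Metric.diam_subsingleton (s := F) (Set.subsingleton_of_subsingleton)
    linarith
  have hsn : (1:ℝ) ≤ Real.sqrt n := by
    rw [show (1:ℝ) = Real.sqrt 1 by simp]
    exact Real.sqrt_le_sqrt (by exact_mod_cast hn)
  have hsn' : Real.sqrt n ≤ n := by
    have hn1 : (1:ℝ) ≤ (n:ℝ) := by exact_mod_cast hn
    nlinarith [Real.sq_sqrt (by positivity : (0:ℝ) ≤ (n:ℝ)), Real.sqrt_nonneg (n:ℝ), hsn]
  -- total measure
  have hM : μH[m] F ≠ ⊤ := mset_finite hFc hd hFm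
  set Mr : ℝ := (μH[m] F).toReal with hMr
  have hMr0 : 0 ≤ Mr := ENNReal.toReal_nonneg
  set cF : ℝ := Mr / Metric.diam F ^ m with hcF
  have hcF0 : 0 ≤ cF := by positivity
  set A : ℝ := max C cF with hA
  have hA0 : 0 < A := lt_of_lt_of_le hC (le_max_left _ _)
  set T : ℤ := 12 * (n:ℤ) + 1 with hT
  set Kfib : ℕ := (2 * T + 1).toNat ^ n with hKfib
  have hKfib1 : 1 ≤ Kfib := Nat.one_le_pow _ _ (by omega)
  refine ⟨(Kfib:ℝ) * 2^n * A * C * (15:ℝ)^m, by positivity, ?_⟩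
  intro x₀ hx₀ R hR hR3 k
  set ℓ : ℝ := (2:ℝ) ^ (-k) with hℓdef
  have hℓ : 0 < ℓ := by positivity
  set S := {a : Fin n → ℤ | dyadicCube k a ⊆ Metric.ball x₀ R ∧
          IsWhitneyCube F (dyadicCube k a)} with hSdef
  -- finiteness of S
  have hSfin : S.Finite := by
    apply Set.Finite.subset (Set.Finite.pi
      (t := fun i : Fin n => Set.Icc ⌈(x₀ i - R)/ℓ⌉ ⌊(x₀ i + R)/ℓ⌋)
      (fun i => Set.finite_Icc _ _))
    intro a ha
    have hball : corner k a ∈ Metric.ball x₀ R := ha.1 (corner_mem k a)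
    rw [Metric.mem_ball] at hball
    intro i _
    have hco := coord_le_dist (corner k a) x₀ i
    rw [corner_apply] at hco
    rw [abs_le] at hco
    constructor
    · rw [Int.ceil_le]
      rw [div_le_iff₀ hℓ]
      linarith [hco.1, hball, hco.2]
    · rw [Int.le_floor]
      rw [le_div_iff₀ hℓ]
      linarith [hco.1, hco.2, hball]
  set 𝒮 : Finset (Fin n → ℤ) := hSfin.toFinset with h𝒮
  have hncard : S.ncard = 𝒮.card := Set.ncard_eq_toFinset_card _ hSfin
  rw [hncard]
  have hmem' : ∀ a ∈ 𝒮, dyadicCube k a ⊆ Metric.ball x₀ R ∧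
      IsWhitneyCube F (dyadicCube k a) := by
    intro a ha
    exact hSfin.mem_toFinset.1 ha
  -- trivial case : 𝒮 empty
  rcases Finset.eq_empty_or_nonempty 𝒮 with h𝒮e | ⟨a₀, ha₀⟩
  · rw [h𝒮e]
    simp only [Finset.card_empty, Nat.cast_zero]
    positivity
  -- per-cube facts
  have hfact : ∀ a ∈ 𝒮, ℓ < R ∧ Metric.diam (dyadicCube k a) < R ∧
      setDist (dyadicCube k a) F < R := by
    intro a ha
    obtain ⟨hsub, hW⟩ := hmem' a ha
    have hW1 : Metric.diam (dyadicCube k a) ≤ setDist (dyadicCube k a) F := hW.1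
    have hball : corner k a ∈ Metric.ball x₀ R := hsub (corner_mem k a)
    rw [Metric.mem_ball] at hball
    have hsd : setDist (dyadicCube k a) F < R :=
      lt_of_le_of_lt (setDist_le_dist (corner_mem k a) hx₀) hball
    have hdQ : Metric.diam (dyadicCube k a) < R := lt_of_le_of_lt hW1 hsd
    exact ⟨lt_of_le_of_lt (le_cube_diam hn k a) hdQ, hdQ, hsd⟩
  have hℓR : ℓ < R := (hfact a₀ ha₀).1
  -- selection of nearby points of F
  have hsel : ∀ a ∈ 𝒮, ∃ y, y ∈ F ∧ dist (corner k a) y ≤ 6 * Real.sqrt n * ℓ ∧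
      dist y x₀ < 4 * R := by
    intro a ha
    obtain ⟨hsub, hW⟩ := hmem' a ha
    have hW1 : Metric.diam (dyadicCube k a) ≤ setDist (dyadicCube k a) F := hW.1
    have hW2 : setDist (dyadicCube k a) F ≤ 4 * Metric.diam (dyadicCube k a) := hW.2
    obtain ⟨hℓR', hdQR, hsdR⟩ := hfact a ha
    obtain ⟨q, hq, y, hy, hqy⟩ := setDist_exists_lt (A := dyadicCube k a) (B := F)
      ⟨corner k a, corner_mem k a⟩ hFne hℓ
    have hdcq : dist (corner k a) q ≤ Metric.diam (dyadicCube k a) :=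
      Metric.dist_le_diam_of_mem (cube_bounded k a) (corner_mem k a) hq
    have hdiam_le : Metric.diam (dyadicCube k a) ≤ Real.sqrt n * ℓ := cube_diam_le k a
    refine ⟨y, hy, ?_, ?_⟩
    · calc dist (corner k a) y ≤ dist (corner k a) q + dist q y := dist_triangle _ _ _
        _ ≤ Real.sqrt n * ℓ + (4 * (Real.sqrt n * ℓ) + ℓ) := by
            have := hW2.trans (by nlinarith : 4 * Metric.diam (dyadicCube k a) ≤ 4 * (Real.sqrt n * ℓ))
            nlinarith
        _ ≤ 6 * Real.sqrt n * ℓ := by nlinarith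
    · have hball : corner k a ∈ Metric.ball x₀ R := hsub (corner_mem k a)
      rw [Metric.mem_ball] at hball
      calc dist y x₀ ≤ dist y (corner k a) + dist (corner k a) x₀ := dist_triangle _ _ _
        _ = dist (corner k a) y + dist (corner k a) x₀ := by rw [dist_comm]
        _ < (Metric.diam (dyadicCube k a) + (setDist (dyadicCube k a) F + ℓ)) + R := by
            have : dist (corner k a) y ≤ dist (corner k a) q + dist q y := dist_triangle _ _ _
            linarith
        _ < 4 * R := by linarith
  choose! y hyF hy1 hy2 using hsel
  -- the floor map
  set φ : (Fin n → ℤ) → (Fin n → ℤ) := fun a i => ⌊y a i / ℓ⌋ with hφ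
  -- floor coordinate bounds
  have hfloor : ∀ a ∈ 𝒮, ∀ i, (φ a i : ℝ) * ℓ ≤ y a i ∧ y a i < (φ a i + 1 : ℝ) * ℓ := by
    intro a _ i
    constructor
    · rw [← le_div_iff₀ hℓ]
      exact Int.floor_le _
    · rw [← div_lt_iff₀ hℓ]
      push_cast
      exact Int.lt_floor_add_one _
  -- fiber bound
  have hfiber : ∀ b ∈ 𝒮.image φ, (𝒮.filter fun a => φ a = b).card ≤ Kfib := by
    intro b hb
    obtain ⟨a0, ha0', hφa0⟩ := Finset.mem_image.1 hb
    apply lattice_count _ a0 T (by omega)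
    intro a ha i
    obtain ⟨ha𝒮, hφa⟩ := Finset.mem_filter.1 ha
    -- |y a i - y a0 i| < ℓ
    have h1 := (hfloor a ha𝒮 i).1
    have h2 := (hfloor a ha𝒮 i).2
    have h3 := (hfloor a0 ha0' i).1
    have h4 := (hfloor a0 ha0' i).2
    rw [hφa] at h1 h2
    rw [hφa0] at h3 h4
    have hyy : |y a i - y a0 i| < ℓ := by
      rw [abs_lt]; constructor <;> nlinarith
    have hc1 : |(a i : ℝ) * ℓ - y a i| ≤ 6 * Real.sqrt n * ℓ := by
      have := coord_le_dist (corner k a) (y a) i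
      rw [corner_apply] at this
      exact this.trans (hy1 a ha𝒮)
    have hc2 : |(a0 i : ℝ) * ℓ - y a0 i| ≤ 6 * Real.sqrt n * ℓ := by
      have := coord_le_dist (corner k a0) (y a0) i
      rw [corner_apply] at this
      exact this.trans (hy1 a0 ha0')
    have habs : |(a i : ℝ) - a0 i| * ℓ ≤ ((12:ℝ) * n + 1) * ℓ := by
      have : |(a i : ℝ) - a0 i| * ℓ = |(a i : ℝ) * ℓ - (a0 i : ℝ) * ℓ| := by
        rw [← abs_of_pos hℓ, ← abs_mul, sub_mul, abs_of_pos hℓ]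
      rw [this]
      calc |(a i : ℝ) * ℓ - (a0 i : ℝ) * ℓ|
          ≤ |(a i : ℝ) * ℓ - y a i| + |y a i - (a0 i : ℝ) * ℓ| := abs_sub_le _ _ _
        _ ≤ |(a i : ℝ) * ℓ - y a i| + (|y a i - y a0 i| + |y a0 i - (a0 i : ℝ) * ℓ|) := by
            linarith [abs_sub_le (y a i) (y a0 i) ((a0 i : ℝ) * ℓ)]
        _ ≤ (12 * Real.sqrt n + 1) * ℓ := by
            rw [abs_sub_comm (y a0 i) ((a0 i : ℝ) * ℓ)]
            linarith
        _ ≤ ((12:ℝ) * n + 1) * ℓ := by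
            have h12 : 12 * Real.sqrt n + 1 ≤ 12 * (n:ℝ) + 1 := by linarith
            exact mul_le_mul_of_nonneg_right h12 hℓ.le
    have : |(a i : ℝ) - a0 i| ≤ (12:ℝ) * n + 1 :=
      le_of_mul_le_mul_right (by linarith) hℓ
    have hfin : ((|a i - a0 i| : ℤ) : ℝ) ≤ 12 * (n:ℝ) + 1 := by
      push_cast [Int.cast_abs]
      exact this
    have hfin2 : |a i - a0 i| ≤ 12 * (n:ℤ) + 1 := by exact_mod_cast hfin
    rw [hT]
    exact hfin2
  have hcard1 : 𝒮.card ≤ Kfib * (𝒮.image φ).card :=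
    Finset.card_le_mul_card_image _ _ hfiber
  -- parity partition
  set p : (Fin n → ℤ) → (Fin n → ZMod 2) := fun b i => (b i : ZMod 2) with hp
  have hcard2 : (𝒮.image φ).card = ∑ c : Fin n → ZMod 2,
      ((𝒮.image φ).filter fun b => p b = c).card :=
    Finset.card_eq_sum_card_fiberwise (fun x _ => Finset.mem_univ _)
  -- per-class measure estimate
  have hclass : ∀ c : Fin n → ZMod 2,
      ((((𝒮.image φ).filter fun b => p b = c).card : ℝ)) * (C⁻¹ * (ℓ/3) ^ m)
        ≤ A * (5*R) ^ m := by
    intro c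
    set t := (𝒮.image φ).filter fun b => p b = c with ht
    have hrep : ∀ b ∈ t, ∃ a ∈ 𝒮, φ a = b := by
      intro b hb
      exact Finset.mem_image.1 (Finset.mem_filter.1 hb).1
    choose! rep hrep1 hrep2 using hrep
    set z : (Fin n → ℤ) → EuclideanSpace ℝ (Fin n) := fun b => y (rep b) with hz
    set g : (Fin n → ℤ) → Set (EuclideanSpace ℝ (Fin n)) :=
      fun b => Metric.ball (z b) (ℓ/3) ∩ F with hg
    -- coordinates of z
    have hzco : ∀ b ∈ t, ∀ i, (b i : ℝ) * ℓ ≤ z b i ∧ z b i < (b i + 1 : ℝ) * ℓ := by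
      intro b hb i
      have h1 := (hfloor (rep b) (hrep1 b hb) i).1
      have h2 := (hfloor (rep b) (hrep1 b hb) i).2
      rw [hrep2 b hb] at h1 h2
      exact ⟨h1, h2⟩
    -- pairwise disjoint
    have hdisj : (↑t : Set (Fin n → ℤ)).PairwiseDisjoint g := by
      intro b hb b' hb' hne
      simp only [Finset.mem_coe] at hb hb'
      have hpar : p b = p b' := by
        rw [(Finset.mem_filter.1 hb).2, (Finset.mem_filter.1 hb').2]
      obtain ⟨i, hi⟩ : ∃ i, b i ≠ b' i := by
        by_contra hcon
        push_neg at hcon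
        exact hne (funext hcon)
      have hdvd : (2:ℤ) ∣ b' i - b i := by
        have := congrFun hpar i
        rw [hp] at this
        simp only at this
        rw [ZMod.intCast_eq_intCast_iff] at this
        exact Int.ModEq.dvd this
      have h2le : b i + 2 ≤ b' i ∨ b' i + 2 ≤ b i := by
        obtain ⟨c, hc⟩ := hdvd
        omega
      have hzb := hzco b hb i
      have hzb' := hzco b' hb' i
      have hdistge : ℓ ≤ dist (z b) (z b') := by
        refine le_trans ?_ (coord_le_dist (z b) (z b') i)
        rcases h2le with hle | hle
        · rw [abs_sub_comm, le_abs]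
          left
          have : ((b i : ℝ) + 2) ≤ (b' i : ℝ) := by exact_mod_cast hle
          nlinarith
        · rw [le_abs]
          left
          have : ((b' i : ℝ) + 2) ≤ (b i : ℝ) := by exact_mod_cast hle
          nlinarith
      apply Set.disjoint_of_subset Set.inter_subset_left Set.inter_subset_left
      exact Metric.ball_disjoint_ball (by linarith)
    have hmeas : ∀ b ∈ t, MeasurableSet (g b) :=
      fun b _ => measurableSet_ball.inter hFc.isClosed.measurableSet
    have hunion : μH[m] (⋃ b ∈ t, g b) = ∑ b ∈ t, μH[m] (g b) :=
      measure_biUnion_finset hdisj hmeas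
    -- lower bound for each ball
    have hr3 : ℓ/3 ≤ Metric.diam F := by linarith
    have hlow : ∀ b ∈ t, ENNReal.ofReal (C⁻¹ * (ℓ/3) ^ m) ≤ μH[m] (g b) := by
      intro b hb
      exact (hFm (z b) (hyF (rep b) (hrep1 b hb)) (ℓ/3) (by linarith) hr3).1.le
    have hsumlow : (t.card : ℝ≥0∞) * ENNReal.ofReal (C⁻¹ * (ℓ/3) ^ m)
        ≤ ∑ b ∈ t, μH[m] (g b) := by
      have := Finset.card_nsmul_le_sum t (fun b => μH[m] (g b))
        (ENNReal.ofReal (C⁻¹ * (ℓ/3) ^ m)) hlow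
      rwa [nsmul_eq_mul] at this
    -- upper bound : union inside ball x₀ (5R)
    have hsub5 : (⋃ b ∈ t, g b) ⊆ Metric.ball x₀ (5*R) ∩ F := by
      intro w hw
      obtain ⟨b, hb, hwb⟩ := Set.mem_iUnion₂.1 hw
      obtain ⟨hw1, hw2⟩ := hwb
      refine ⟨?_, hw2⟩
      rw [Metric.mem_ball] at hw1 ⊢
      have hzx : dist (z b) x₀ < 4 * R := hy2 (rep b) (hrep1 b hb)
      calc dist w x₀ ≤ dist w (z b) + dist (z b) x₀ := dist_triangle _ _ _
        _ < ℓ/3 + 4*R := by linarith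
        _ ≤ 5*R := by linarith
    have hup : μH[m] (Metric.ball x₀ (5*R) ∩ F) ≤ ENNReal.ofReal (A * (5*R) ^ m) := by
      rcases le_or_gt (5*R) (Metric.diam F) with h5 | h5
      · refine le_trans (hFm x₀ hx₀ (5*R) (by linarith) h5).2.le ?_
        apply ENNReal.ofReal_le_ofReal
        apply mul_le_mul_of_nonneg_right (le_max_left _ _)
        positivity
      · calc μH[m] (Metric.ball x₀ (5*R) ∩ F) ≤ μH[m] F :=
            measure_mono Set.inter_subset_right
          _ = ENNReal.ofReal Mr := (ENNReal.ofReal_toReal hM).symm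
          _ ≤ ENNReal.ofReal (A * (5*R) ^ m) := by
              apply ENNReal.ofReal_le_ofReal
              have hdm : (0:ℝ) < Metric.diam F ^ m := Real.rpow_pos_of_pos hd m
              have h1 : Metric.diam F ^ m ≤ (5*R) ^ m :=
                Real.rpow_le_rpow (le_of_lt hd) h5.le hm.le
              have h2 : Mr ≤ cF * (5*R) ^ m := by
                rw [hcF, div_mul_eq_mul_div, le_div_iff₀ hdm]
                nlinarith
              refine h2.trans ?_
              apply mul_le_mul_of_nonneg_right (le_max_right _ _)
              positivity
    have hchain : (t.card : ℝ≥0∞) * ENNReal.ofReal (C⁻¹ * (ℓ/3) ^ m)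
        ≤ ENNReal.ofReal (A * (5*R) ^ m) := by
      refine hsumlow.trans ?_
      rw [← hunion]
      exact le_trans (measure_mono hsub5) hup
    -- to real
    have hq0 : 0 ≤ C⁻¹ * (ℓ/3) ^ m := by positivity
    rw [show ((t.card : ℝ≥0∞)) = ENNReal.ofReal (t.card : ℝ) by
        rw [ENNReal.ofReal_natCast], ← ENNReal.ofReal_mul (by positivity)] at hchain
    exact (ENNReal.ofReal_le_ofReal_iff (by positivity)).1 hchain
  -- assemble
  have hq : (0:ℝ) < C⁻¹ * (ℓ/3) ^ m := by positivity
  have hNq : (𝒮.card : ℝ) * (C⁻¹ * (ℓ/3) ^ m)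
      ≤ (Kfib : ℝ) * 2^n * (A * (5*R) ^ m) := by
    have hN : (𝒮.card : ℝ) ≤ (Kfib : ℝ) * ∑ c : Fin n → ZMod 2,
        (((𝒮.image φ).filter fun b => p b = c).card : ℝ) := by
      rw [← Nat.cast_sum, ← hcard2]
      exact_mod_cast hcard1
    have hsum : (∑ c : Fin n → ZMod 2,
        (((𝒮.image φ).filter fun b => p b = c).card : ℝ)) * (C⁻¹ * (ℓ/3) ^ m)
        ≤ 2^n * (A * (5*R) ^ m) := by
      rw [Finset.sum_mul]
      calc ∑ c : Fin n → ZMod 2, (((𝒮.image φ).filter fun b => p b = c).card : ℝ)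
            * (C⁻¹ * (ℓ/3) ^ m)
          ≤ ∑ _c : Fin n → ZMod 2, A * (5*R) ^ m :=
            Finset.sum_le_sum (fun c _ => hclass c)
        _ = 2^n * (A * (5*R) ^ m) := by
            rw [Finset.sum_const, nsmul_eq_mul]
            congr 1
            simp [Fintype.card_fun]
      -- done
    calc (𝒮.card : ℝ) * (C⁻¹ * (ℓ/3) ^ m)
        ≤ ((Kfib : ℝ) * ∑ c : Fin n → ZMod 2,
            (((𝒮.image φ).filter fun b => p b = c).card : ℝ)) * (C⁻¹ * (ℓ/3) ^ m) :=
          mul_le_mul_of_nonneg_right hN hq.le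
      _ = (Kfib : ℝ) * ((∑ c : Fin n → ZMod 2,
            (((𝒮.image φ).filter fun b => p b = c).card : ℝ)) * (C⁻¹ * (ℓ/3) ^ m)) := by ring
      _ ≤ (Kfib : ℝ) * (2^n * (A * (5*R) ^ m)) :=
          mul_le_mul_of_nonneg_left hsum (by positivity)
      _ = (Kfib : ℝ) * 2^n * (A * (5*R) ^ m) := by ring
  -- final algebra
  have e1 : (5*R) ^ m = 5 ^ m * R ^ m := Real.mul_rpow (by norm_num) hR.le
  have e2 : (ℓ/3) ^ m = ℓ ^ m / 3 ^ m := Real.div_rpow hℓ.le (by norm_num) m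
  have e15 : (15:ℝ) ^ m = 5 ^ m * 3 ^ m := by
    rw [show (15:ℝ) = 5 * 3 by norm_num]
    exact Real.mul_rpow (by norm_num) (by norm_num)
  have e3 : (2:ℝ) ^ ((k:ℝ) * m) * ℓ ^ m = 1 := by
    have hℓr : ℓ = (2:ℝ) ^ ((-k : ℝ)) := by
      rw [hℓdef, show ((-k : ℝ)) = ((-k : ℤ) : ℝ) by push_cast; ring, Real.rpow_intCast]
    rw [hℓr, ← Real.rpow_mul (by norm_num : (0:ℝ) ≤ 2),
      ← Real.rpow_add (by norm_num : (0:ℝ) < 2)]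
    rw [show (k:ℝ) * m + -(k:ℝ) * m = 0 by ring, Real.rpow_zero]
  have hkey : ((Kfib:ℝ) * 2^n * A * C * (15:ℝ)^m) * R ^ m * (2:ℝ) ^ ((k:ℝ) * m)
      * (C⁻¹ * (ℓ/3) ^ m) = (Kfib : ℝ) * 2^n * (A * (5*R) ^ m) := by
    rw [e1, e2, e15]
    have h3m : (3:ℝ) ^ m ≠ 0 := by positivity
    have hCC : C * C⁻¹ = 1 := mul_inv_cancel₀ hC.ne'
    have h33 : (3:ℝ) ^ m / (3:ℝ) ^ m = 1 := div_self h3m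
    calc ((Kfib:ℝ) * 2^n * A * C * (5 ^ m * 3 ^ m)) * R ^ m * (2:ℝ) ^ ((k:ℝ) * m)
        * (C⁻¹ * (ℓ ^ m / 3 ^ m))
        = ((Kfib:ℝ) * 2^n * (A * (5 ^ m * R ^ m))) * ((C * C⁻¹) *
            (((2:ℝ) ^ ((k:ℝ) * m) * ℓ ^ m) * ((3:ℝ) ^ m / (3:ℝ) ^ m))) := by ring
      _ = (Kfib : ℝ) * 2^n * (A * (5 ^ m * R ^ m)) := by rw [hCC, e3, h33]; ring
  exact le_of_mul_le_mul_right (hNq.trans_eq hkey.symm) hq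
end

section
/- Let Ω ⊂ ℝ² be the cuspidal domain {(x,y) : 0 < x < 1, 0 < |y| < x^{1/α}} with 1/2 < α ≤ 1, d = dist to ∂Ω, and 1 ≤ r < 2/(3−2α). If p ∈ L²(Ω, 1−α) (i.e., p·d^{1−α} ∈ L²(Ω)), then p ∈ L^r(Ω) and ‖p‖_{L^r(Ω)} ≤ C‖p·d^{1−α}‖_{L²(Ω)} with C depending only on α and r. -/
open MeasureTheory

namespace CuspAux

open Set ENNReal intervalIntegral

lemma measF (β : ℝ) : Measurable fun t : ℝ => ENNReal.ofReal (t ^ β) :=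
  (measurable_id.pow measurable_const).ennreal_ofReal

lemma lint_Ioc_rpow {β : ℝ} (hβ : -1 < β) {c : ℝ} (hc : 0 < c) (hc1 : c ≤ 1) :
    ∫⁻ y in Set.Ioc 0 c, ENNReal.ofReal (y ^ β) ≤ ENNReal.ofReal (1 / (β + 1)) := by
  have hβ1 : 0 < β + 1 := by linarith
  have hint : IntegrableOn (fun y : ℝ => y ^ β) (Set.Ioc 0 c) volume := by
    have := intervalIntegral.intervalIntegrable_rpow' (a := 0) (b := c) hβ
    rwa [intervalIntegrable_iff_integrableOn_Ioc_of_le hc.le] at this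
  have hnn : 0 ≤ᵐ[volume.restrict (Set.Ioc 0 c)] fun y : ℝ => y ^ β := by
    filter_upwards [ae_restrict_mem measurableSet_Ioc] with y hy
    exact Real.rpow_nonneg hy.1.le _
  rw [← ofReal_integral_eq_lintegral_ofReal hint hnn]
  apply ENNReal.ofReal_le_ofReal
  have h1 : ∫ y in Set.Ioc 0 c, y ^ β = ∫ y in (0:ℝ)..c, y ^ β := by
    rw [intervalIntegral.integral_of_le hc.le]
  have h2 : ∫ y in (0:ℝ)..c, y ^ β = (c ^ (β + 1) - (0:ℝ) ^ (β + 1)) / (β + 1) :=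
    integral_rpow (Or.inl hβ)
  rw [h1, h2, Real.zero_rpow (by linarith), sub_zero]
  have hc' : c ^ (β + 1) ≤ 1 := Real.rpow_le_one hc.le hc1 hβ1.le
  gcongr

lemma lint_Ico_rpow {β : ℝ} (hβ : -1 < β) {c : ℝ} (hc : 0 < c) (hc1 : c ≤ 1) :
    ∫⁻ y in Set.Ico 0 c, ENNReal.ofReal (y ^ β) ≤ ENNReal.ofReal (1 / (β + 1)) := by
  have hsub : Set.Ico (0:ℝ) c ⊆ {0} ∪ Set.Ioc 0 c := by
    intro y hy
    rcases eq_or_lt_of_le hy.1 with h | h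
    · exact Or.inl (by simp [← h])
    · exact Or.inr ⟨h, hy.2.le⟩
  calc ∫⁻ y in Set.Ico 0 c, ENNReal.ofReal (y ^ β)
      ≤ ∫⁻ y in ({0} ∪ Set.Ioc 0 c : Set ℝ), ENNReal.ofReal (y ^ β) :=
        lintegral_mono_set hsub
    _ ≤ (∫⁻ y in ({0} : Set ℝ), ENNReal.ofReal (y ^ β))
        + ∫⁻ y in Set.Ioc 0 c, ENNReal.ofReal (y ^ β) := lintegral_union_le _ _ _
    _ ≤ 0 + ENNReal.ofReal (1 / (β + 1)) := by
        gcongr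
        · rw [setLIntegral_measure_zero _ _ Real.volume_singleton]
        · exact lint_Ioc_rpow hβ hc hc1
    _ = ENNReal.ofReal (1 / (β + 1)) := by rw [zero_add]

lemma split_Ioo {c : ℝ} : Set.Ioo (-c) c ⊆ Set.Ioc (-c) 0 ∪ Set.Ioc 0 c := by
  intro y hy
  rcases le_or_gt y 0 with h | h
  · exact Or.inl ⟨hy.1, h⟩
  · exact Or.inr ⟨h, hy.2.le⟩

lemma lemA {β : ℝ} (hβ : -1 < β) {c : ℝ} (hc : 0 < c) (hc1 : c ≤ 1) :
    ∫⁻ y in Set.Ioo (-c) c, ENNReal.ofReal (|y| ^ β)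
      ≤ ENNReal.ofReal (1 / (β + 1)) + ENNReal.ofReal (1 / (β + 1)) := by
  have h1 : ∫⁻ y in Set.Ioc (-c) 0, ENNReal.ofReal (|y| ^ β)
      ≤ ENNReal.ofReal (1 / (β + 1)) := by
    have hcongr : ∀ y ∈ Set.Ioc (-c) (0:ℝ), ENNReal.ofReal (|y| ^ β)
        = ENNReal.ofReal ((-y) ^ β) := fun y hy => by rw [abs_of_nonpos hy.2]
    rw [setLIntegral_congr_fun measurableSet_Ioc hcongr]
    have him : Set.Ioc (-c) (0:ℝ) = Neg.neg ⁻¹' Set.Ico 0 c := by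
      ext y; simp only [Set.mem_Ioc, Set.mem_preimage, Set.mem_Ico]
      constructor
      · rintro ⟨ha, hb⟩; exact ⟨by linarith, by linarith⟩
      · rintro ⟨ha, hb⟩; exact ⟨by linarith, by linarith⟩
    rw [him,
      (Measure.measurePreserving_neg volume).setLIntegral_comp_preimage measurableSet_Ico
        (measF β)]
    exact lint_Ico_rpow hβ hc hc1
  have h2 : ∫⁻ y in Set.Ioc 0 c, ENNReal.ofReal (|y| ^ β)
      ≤ ENNReal.ofReal (1 / (β + 1)) := by
    have hcongr : ∀ y ∈ Set.Ioc (0:ℝ) c, ENNReal.ofReal (|y| ^ β)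
        = ENNReal.ofReal (y ^ β) := fun y hy => by rw [abs_of_pos hy.1]
    rw [setLIntegral_congr_fun measurableSet_Ioc hcongr]
    exact lint_Ioc_rpow hβ hc hc1
  calc ∫⁻ y in Set.Ioo (-c) c, ENNReal.ofReal (|y| ^ β)
      ≤ ∫⁻ y in Set.Ioc (-c) 0 ∪ Set.Ioc 0 c, ENNReal.ofReal (|y| ^ β) :=
        lintegral_mono_set split_Ioo
    _ ≤ (∫⁻ y in Set.Ioc (-c) 0, ENNReal.ofReal (|y| ^ β))
        + ∫⁻ y in Set.Ioc 0 c, ENNReal.ofReal (|y| ^ β) := lintegral_union_le _ _ _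
    _ ≤ _ := add_le_add h1 h2

lemma lemB {β : ℝ} (hβ : -1 < β) {c : ℝ} (hc : 0 < c) (hc1 : c ≤ 1) :
    ∫⁻ y in Set.Ioo (-c) c, ENNReal.ofReal ((c - |y|) ^ β)
      ≤ ENNReal.ofReal (1 / (β + 1)) + ENNReal.ofReal (1 / (β + 1)) := by
  have h1 : ∫⁻ y in Set.Ioc (-c) 0, ENNReal.ofReal ((c - |y|) ^ β)
      ≤ ENNReal.ofReal (1 / (β + 1)) := by
    have hcongr : ∀ y ∈ Set.Ioc (-c) (0:ℝ), ENNReal.ofReal ((c - |y|) ^ β)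
        = ENNReal.ofReal ((y + c) ^ β) := fun y hy => by
      rw [abs_of_nonpos hy.2]; ring_nf
    rw [setLIntegral_congr_fun measurableSet_Ioc hcongr]
    have him : Set.Ioc (-c) (0:ℝ) = (· + c) ⁻¹' Set.Ioc 0 c := by
      ext y; simp only [Set.mem_Ioc, Set.mem_preimage]
      constructor
      · rintro ⟨ha, hb⟩; exact ⟨by linarith, by linarith⟩
      · rintro ⟨ha, hb⟩; exact ⟨by linarith, by linarith⟩
    rw [him,
      (measurePreserving_add_right volume c).setLIntegral_comp_preimage measurableSet_Ioc
        (measF β)]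
    exact lint_Ioc_rpow hβ hc hc1
  have h2 : ∫⁻ y in Set.Ioc 0 c, ENNReal.ofReal ((c - |y|) ^ β)
      ≤ ENNReal.ofReal (1 / (β + 1)) := by
    have hcongr : ∀ y ∈ Set.Ioc (0:ℝ) c, ENNReal.ofReal ((c - |y|) ^ β)
        = ENNReal.ofReal ((c - y) ^ β) := fun y hy => by rw [abs_of_pos hy.1]
    rw [setLIntegral_congr_fun measurableSet_Ioc hcongr]
    have him : Set.Ioc (0:ℝ) c = (fun y : ℝ => c - y) ⁻¹' Set.Ico 0 c := by
      ext y; simp only [Set.mem_Ioc, Set.mem_preimage, Set.mem_Ico]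
      constructor
      · rintro ⟨ha, hb⟩; exact ⟨by linarith, by linarith⟩
      · rintro ⟨ha, hb⟩; exact ⟨by linarith, by linarith⟩
    rw [him,
      (Measure.measurePreserving_sub_left volume c).setLIntegral_comp_preimage measurableSet_Ico
        (measF β)]
    exact lint_Ico_rpow hβ hc hc1
  calc ∫⁻ y in Set.Ioo (-c) c, ENNReal.ofReal ((c - |y|) ^ β)
      ≤ ∫⁻ y in Set.Ioc (-c) 0 ∪ Set.Ioc 0 c, ENNReal.ofReal ((c - |y|) ^ β) :=
        lintegral_mono_set split_Ioo
    _ ≤ _ := le_trans (lintegral_union_le _ _ _) (add_le_add h1 h2)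

lemma lemC {β : ℝ} (hβ : -1 < β) :
    ∫⁻ x in Set.Ioo (0:ℝ) 1, ENNReal.ofReal ((1 - x) ^ β)
      ≤ ENNReal.ofReal (1 / (β + 1)) := by
  have him : Set.Ioc (0:ℝ) 1 = (fun x : ℝ => 1 - x) ⁻¹' Set.Ico 0 1 := by
    ext x; simp only [Set.mem_Ioc, Set.mem_preimage, Set.mem_Ico]
    constructor
    · rintro ⟨ha, hb⟩; exact ⟨by linarith, by linarith⟩
    · rintro ⟨ha, hb⟩; exact ⟨by linarith, by linarith⟩
  calc ∫⁻ x in Set.Ioo (0:ℝ) 1, ENNReal.ofReal ((1 - x) ^ β)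
      ≤ ∫⁻ x in Set.Ioc (0:ℝ) 1, ENNReal.ofReal ((1 - x) ^ β) :=
        lintegral_mono_set Set.Ioo_subset_Ioc_self
    _ = ∫⁻ x in Set.Ico (0:ℝ) 1, ENNReal.ofReal (x ^ β) := by
        rw [him,
          (Measure.measurePreserving_sub_left volume 1).setLIntegral_comp_preimage
            measurableSet_Ico (measF β)]
    _ ≤ _ := lint_Ico_rpow hβ one_pos le_rfl

lemma rpow_lip {p a b : ℝ} (hp : 1 ≤ p) (hp2 : p ≤ 2) (ha : 0 ≤ a) (hab : a ≤ b) (hb : b ≤ 1) :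
    b ^ p - a ^ p ≤ 2 * (b - a) := by
  have key : ‖b ^ p - a ^ p‖ ≤ 2 * ‖b - a‖ := by
    apply Convex.norm_image_sub_le_of_norm_hasDerivWithin_le
      (f := fun t : ℝ => t ^ p) (f' := fun t : ℝ => p * t ^ (p - 1)) (s := Set.Icc 0 1)
      (fun t _ => (Real.hasDerivAt_rpow_const (Or.inr hp)).hasDerivWithinAt)
      (fun t ht => ?_) (convex_Icc 0 1) ⟨ha, hab.trans hb⟩ ⟨ha.trans hab, hb⟩
    have h1 : t ^ (p - 1) ≤ 1 := Real.rpow_le_one ht.1 ht.2 (by linarith)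
    have h0 : 0 ≤ t ^ (p - 1) := Real.rpow_nonneg ht.1 _
    show ‖p * t ^ (p - 1)‖ ≤ 2
    rw [Real.norm_eq_abs, abs_of_nonneg (by positivity)]
    nlinarith
  have hmono : a ^ p ≤ b ^ p := Real.rpow_le_rpow ha hab (by linarith)
  rw [Real.norm_eq_abs, Real.norm_eq_abs, abs_of_nonneg (by linarith),
    abs_of_nonneg (by linarith)] at key
  exact key

lemma cusp_isOpen {α : ℝ} (hα : 0 < α) : IsOpen (cuspDomain α) := by
  have hcont : Continuous fun q : ℝ × ℝ => q.1 ^ (1 / α) :=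
    (Real.continuous_rpow_const (by positivity)).comp continuous_fst
  have heq : cuspDomain α = {q : ℝ × ℝ | 0 < q.1} ∩ {q : ℝ × ℝ | q.1 < 1}
      ∩ ({q : ℝ × ℝ | 0 < |q.2|} ∩ {q : ℝ × ℝ | |q.2| < q.1 ^ (1 / α)}) := by
    ext q; simp only [cuspDomain, Set.mem_inter_iff, Set.mem_setOf_eq]; tauto
  rw [heq]
  exact ((isOpen_lt continuous_const continuous_fst).inter
      (isOpen_lt continuous_fst continuous_const)).inter
    ((isOpen_lt continuous_const continuous_snd.abs).inter
      (isOpen_lt continuous_snd.abs hcont))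

lemma cusp_frontier_nonempty {α : ℝ} (hα : 0 < α) :
    (frontier (cuspDomain α)).Nonempty := by
  refine ⟨((1:ℝ)/2, 0), ?_, ?_⟩
  · -- in closure
    set c0 : ℝ := ((1:ℝ)/2) ^ (1 / α) with hc0
    have hc0pos : 0 < c0 := Real.rpow_pos_of_pos (by norm_num) _
    have htend : Filter.Tendsto (fun n : ℕ => (((1:ℝ)/2, c0 * ((1:ℝ)/2) ^ (n + 1)) : ℝ × ℝ))
        Filter.atTop (nhds (((1:ℝ)/2, 0) : ℝ × ℝ)) := by
      apply Filter.Tendsto.prodMk_nhds tendsto_const_nhds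
      have h0 : Filter.Tendsto (fun n : ℕ => ((1:ℝ)/2) ^ n) Filter.atTop (nhds 0) :=
        tendsto_pow_atTop_nhds_zero_of_lt_one (by norm_num) (by norm_num)
      have h1 := (h0.const_mul c0).comp (Filter.tendsto_add_atTop_nat 1)
      simpa [Function.comp_def, mul_zero] using h1
    apply mem_closure_of_tendsto htend
    filter_upwards with n
    refine ⟨by norm_num, by norm_num, ?_, ?_⟩
    · rw [abs_of_pos (by positivity)]; positivity
    · rw [abs_of_pos (by positivity)]
      calc c0 * ((1:ℝ)/2) ^ (n + 1) < c0 * 1 := by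
            apply mul_lt_mul_of_pos_left _ hc0pos
            exact pow_lt_one₀ (by norm_num) (by norm_num) (Nat.succ_ne_zero n)
        _ = c0 := mul_one _
  · -- not in interior
    intro hmem
    have hmm : ((1:ℝ)/2, (0:ℝ)) ∈ cuspDomain α := interior_subset hmem
    simp [cuspDomain] at hmm

lemma cusp_dist_lower {α : ℝ} (hα2 : 1/2 < α) (hα1 : α ≤ 1) {q : ℝ × ℝ}
    (hq : q ∈ cuspDomain α) :
    min (min |q.2| (q.1 ^ (1/α) - |q.2|)) (1 - q.1) / 4
      ≤ Metric.infDist q (frontier (cuspDomain α)) := by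
  have hαpos : 0 < α := by linarith
  obtain ⟨hx0, hx1, hy0, hyc⟩ := hq
  set x := q.1 with hxdef
  set y := q.2 with hydef
  set c := x ^ (1/α) with hcdef
  set M := min (min |y| (c - |y|)) (1 - x) with hMdef
  have hp1 : 1 ≤ 1/α := by rw [le_div_iff₀ hαpos]; linarith
  have hp2 : 1/α ≤ 2 := by rw [div_le_iff₀ hαpos]; linarith
  have hcx : c ≤ x := by
    calc c = x ^ (1/α) := rfl
      _ ≤ x ^ (1:ℝ) := Real.rpow_le_rpow_of_exponent_ge hx0 hx1.le hp1
      _ = x := Real.rpow_one x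
  have hyx : |y| < x := lt_of_lt_of_le hyc hcx
  have hM1 : M ≤ |y| := le_trans (min_le_left _ _) (min_le_left _ _)
  have hM2 : M ≤ c - |y| := le_trans (min_le_left _ _) (min_le_right _ _)
  have hM3 : M ≤ 1 - x := min_le_right _ _
  have hMpos : 0 < M := lt_min (lt_min hy0 (by linarith)) (by linarith)
  by_contra hcon
  push_neg at hcon
  obtain ⟨p, hpf, hpd⟩ := (Metric.infDist_lt_iff (cusp_frontier_nonempty hαpos)).mp hcon
  have hpnot : p ∉ cuspDomain α := by
    intro hpin
    rw [(cusp_isOpen hαpos).frontier_eq] at hpf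
    exact hpf.2 hpin
  apply hpnot
  have hd1 : |x - p.1| < M / 4 := by
    calc |x - p.1| = dist q.1 p.1 := by rw [Real.dist_eq]
      _ ≤ dist q p := by rw [Prod.dist_eq]; exact le_max_left _ _
      _ < M / 4 := hpd
  have hd2 : |y - p.2| < M / 4 := by
    calc |y - p.2| = dist q.2 p.2 := by rw [Real.dist_eq]
      _ ≤ dist q p := by rw [Prod.dist_eq]; exact le_max_right _ _
      _ < M / 4 := hpd
  obtain ⟨hd1a, hd1b⟩ := abs_sub_lt_iff.mp hd1
  have habs : |y| - |p.2| ≤ |y - p.2| := abs_sub_abs_le_abs_sub y p.2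
  have habs2 : |p.2| - |y| ≤ |p.2 - y| := abs_sub_abs_le_abs_sub p.2 y
  have habs3 : |p.2 - y| = |y - p.2| := abs_sub_comm _ _
  refine ⟨?_, ?_, ?_, ?_⟩
  · -- 0 < p.1
    have : M / 4 ≤ |y| / 4 := by linarith
    linarith
  · -- p.1 < 1
    linarith
  · -- 0 < |p.2|
    linarith
  · -- |p.2| < p.1 ^ (1/α)
    have hxm0 : 0 ≤ x - M/4 := by linarith
    have hub : x - M/4 ≤ p.1 := by linarith
    have hmono : (x - M/4) ^ (1/α) ≤ p.1 ^ (1/α) :=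
      Real.rpow_le_rpow hxm0 hub (by positivity)
    have hlip : x ^ (1/α) - (x - M/4) ^ (1/α) ≤ 2 * (x - (x - M/4)) :=
      rpow_lip hp1 hp2 hxm0 (by linarith) hx1.le
    have hc4 : c ≥ |y| + 4 * (M/4) := by linarith
    have hfin : |p.2| < (x - M/4) ^ (1/α) := by
      have h1 : |p.2| < |y| + M/4 := by linarith
      have h2 : (x - M/4) ^ (1/α) ≥ c - 2 * (M/4) := by
        have hle : c ≤ x ^ (1/α) := hcdef.le
        have hge : x ^ (1/α) ≤ c := hcdef.ge
        linarith
      linarith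
    exact lt_of_lt_of_le hfin hmono

/-- Finiteness of the integral of `dist^β` over the cusp domain for `-1 < β ≤ 0`. -/
lemma cusp_lintegral_lt_top {α β : ℝ} (hα2 : 1/2 < α) (hα1 : α ≤ 1)
    (hβ1 : -1 < β) (hβ0 : β ≤ 0) :
    ∫⁻ q in cuspDomain α,
      ENNReal.ofReal ((Metric.infDist q (frontier (cuspDomain α))) ^ β) < ⊤ := by
  have hαpos : 0 < α := by linarith
  set D := fun q : ℝ × ℝ => Metric.infDist q (frontier (cuspDomain α)) with hD
  set S := {q : ℝ × ℝ | 0 < q.1 ∧ q.1 < 1 ∧ |q.2| < q.1 ^ (1/α)} with hS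
  have hScont : Continuous fun q : ℝ × ℝ => q.1 ^ (1/α) :=
    (Real.continuous_rpow_const (by positivity)).comp continuous_fst
  have hSmeas : MeasurableSet S := by
    have heq : S = {q : ℝ×ℝ | 0 < q.1} ∩ ({q : ℝ×ℝ | q.1 < 1}
        ∩ {q : ℝ×ℝ | |q.2| < q.1 ^ (1/α)}) := by
      rw [hS]; rfl
    rw [heq]
    exact (measurableSet_lt measurable_const measurable_fst).inter
      ((measurableSet_lt measurable_fst measurable_const).inter
        (measurableSet_lt measurable_snd.abs hScont.measurable))
  set T1 := fun q : ℝ × ℝ => ENNReal.ofReal (|q.2| ^ β) with hT1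
  set T2 := fun q : ℝ × ℝ => ENNReal.ofReal ((q.1 ^ (1/α) - |q.2|) ^ β) with hT2
  set T3 := fun q : ℝ × ℝ => ENNReal.ofReal ((1 - q.1) ^ β) with hT3
  set F := fun q : ℝ × ℝ => T1 q + T2 q + T3 q with hF
  set K4 := ENNReal.ofReal ((4:ℝ) ^ (-β)) with hK4
  have hT1m : Measurable T1 := (measurable_snd.abs.pow measurable_const).ennreal_ofReal
  have hT2m : Measurable T2 :=
    ((hScont.measurable.sub measurable_snd.abs).pow measurable_const).ennreal_ofReal
  have hT3m : Measurable T3 :=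
    ((measurable_const.sub measurable_fst).pow measurable_const).ennreal_ofReal
  have hFmeas : Measurable F := (hT1m.add hT2m).add hT3m
  -- pointwise bound on the cusp domain
  have hpoint : ∀ q ∈ cuspDomain α, ENNReal.ofReal (D q ^ β) ≤ K4 * F q := by
    intro q hq
    obtain ⟨hx0, hx1, hy0, hyc⟩ := hq
    set M := min (min |q.2| (q.1 ^ (1/α) - |q.2|)) (1 - q.1) with hM
    have hMpos : 0 < M := lt_min (lt_min hy0 (by linarith)) (by linarith)
    have hlow : M / 4 ≤ D q := cusp_dist_lower hα2 hα1 ⟨hx0, hx1, hy0, hyc⟩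
    have h1 : D q ^ β ≤ (M/4) ^ β :=
      Real.rpow_le_rpow_of_nonpos (by positivity) hlow hβ0
    have h2 : (M/4 : ℝ) ^ β = (4:ℝ) ^ (-β) * M ^ β := by
      rw [Real.div_rpow hMpos.le (by norm_num), Real.rpow_neg (by norm_num)]
      field_simp
    have h3 : ENNReal.ofReal (M ^ β) ≤ F q := by
      have hb1 : (0:ℝ) ≤ |q.2| ^ β := Real.rpow_nonneg (abs_nonneg _) _
      have hb2 : (0:ℝ) ≤ (q.1 ^ (1/α) - |q.2|) ^ β := Real.rpow_nonneg (by linarith) _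
      have hb3 : (0:ℝ) ≤ (1 - q.1) ^ β := Real.rpow_nonneg (by linarith) _
      have hcase : M ^ β ≤ |q.2| ^ β + (q.1 ^ (1/α) - |q.2|) ^ β + (1 - q.1) ^ β := by
        rcases min_cases (min |q.2| (q.1 ^ (1/α) - |q.2|)) (1 - q.1) with ⟨hEq, _⟩ | ⟨hEq, _⟩
        · rcases min_cases |q.2| (q.1 ^ (1/α) - |q.2|) with ⟨hEq2, _⟩ | ⟨hEq2, _⟩
          · rw [hM, hEq, hEq2]; linarith
          · rw [hM, hEq, hEq2]; linarith
        · rw [hM, hEq]; linarith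
      calc ENNReal.ofReal (M ^ β)
          ≤ ENNReal.ofReal (|q.2| ^ β + (q.1 ^ (1/α) - |q.2|) ^ β + (1 - q.1) ^ β) :=
            ENNReal.ofReal_le_ofReal hcase
        _ ≤ ENNReal.ofReal (|q.2| ^ β + (q.1 ^ (1/α) - |q.2|) ^ β)
            + ENNReal.ofReal ((1 - q.1) ^ β) := ENNReal.ofReal_add_le
        _ ≤ T1 q + T2 q + T3 q := by
            gcongr
            exact ENNReal.ofReal_add_le
    calc ENNReal.ofReal (D q ^ β) ≤ ENNReal.ofReal ((4:ℝ) ^ (-β) * M ^ β) := by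
          rw [← h2]; exact ENNReal.ofReal_le_ofReal h1
      _ = K4 * ENNReal.ofReal (M ^ β) := by
          rw [hK4, ENNReal.ofReal_mul (Real.rpow_nonneg (by norm_num) _)]
      _ ≤ K4 * F q := by gcongr
  -- Fubini bound helper
  have hzoom : ∀ (H : ℝ × ℝ → ℝ≥0∞), Measurable H → ∀ (I : ℝ → ℝ≥0∞),
      (∀ x : ℝ, 0 < x → x < 1 →
        ∫⁻ y in Set.Ioo (-(x ^ (1/α))) (x ^ (1/α)), H (x, y) ≤ I x) →
      ∫⁻ q in S, H q ≤ ∫⁻ x in Set.Ioo (0:ℝ) 1, I x := by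
    intro H hH I hbound
    rw [← lintegral_indicator hSmeas, Measure.volume_eq_prod,
      lintegral_prod _ ((hH.indicator hSmeas).aemeasurable),
      ← lintegral_indicator measurableSet_Ioo]
    apply lintegral_mono
    intro x
    beta_reduce
    by_cases hx : x ∈ Set.Ioo (0:ℝ) 1
    · have hfib : (fun y => S.indicator H (x, y))
          = (Set.Ioo (-(x ^ (1/α))) (x ^ (1/α))).indicator (fun y => H (x, y)) := by
        funext y
        by_cases hy : |y| < x ^ (1/α)
        · rw [Set.indicator_of_mem (by exact ⟨hx.1, hx.2, hy⟩),
            Set.indicator_of_mem (by rw [Set.mem_Ioo]; constructor <;>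
              [exact neg_lt_of_abs_lt hy; exact lt_of_abs_lt hy])]
        · rw [Set.indicator_of_notMem, Set.indicator_of_notMem]
          · intro hmem
            exact hy (abs_lt.mpr ⟨hmem.1, hmem.2⟩)
          · intro hmem
            exact hy hmem.2.2
      rw [hfib, lintegral_indicator measurableSet_Ioo, Set.indicator_of_mem hx]
      exact hbound x hx.1 hx.2
    · have hzero : ∀ y : ℝ, S.indicator H (x, y) = 0 := by
        intro y
        apply Set.indicator_of_notMem
        intro hmem
        exact hx ⟨hmem.1, hmem.2.1⟩
      simp only [hzero, lintegral_zero, Set.indicator_of_notMem hx]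
      exact le_rfl
  set K := ENNReal.ofReal (1 / (β + 1)) with hK
  have hc_facts : ∀ x : ℝ, 0 < x → x < 1 → 0 < x ^ (1/α) ∧ x ^ (1/α) ≤ 1 := by
    intro x hx0 hx1
    exact ⟨Real.rpow_pos_of_pos hx0 _, Real.rpow_le_one hx0.le hx1.le (by positivity)⟩
  have hI1 : ∫⁻ q in S, T1 q ≤ ∫⁻ _ in Set.Ioo (0:ℝ) 1, (K + K) := by
    apply hzoom T1 hT1m
    intro x hx0 hx1
    obtain ⟨hc0, hc1⟩ := hc_facts x hx0 hx1
    exact lemA hβ1 hc0 hc1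
  have hI2 : ∫⁻ q in S, T2 q ≤ ∫⁻ _ in Set.Ioo (0:ℝ) 1, (K + K) := by
    apply hzoom T2 hT2m
    intro x hx0 hx1
    obtain ⟨hc0, hc1⟩ := hc_facts x hx0 hx1
    exact lemB hβ1 hc0 hc1
  have hI3 : ∫⁻ q in S, T3 q ≤ ∫⁻ x in Set.Ioo (0:ℝ) 1, ENNReal.ofReal ((1 - x) ^ β) * 2 := by
    apply hzoom T3 hT3m (fun x => ENNReal.ofReal ((1 - x) ^ β) * 2)
    intro x hx0 hx1
    obtain ⟨hc0, hc1⟩ := hc_facts x hx0 hx1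
    simp only [hT3]
    rw [setLIntegral_const]
    gcongr
    rw [Real.volume_Ioo]
    calc ENNReal.ofReal (x ^ (1/α) - -(x ^ (1/α))) ≤ ENNReal.ofReal 2 :=
          ENNReal.ofReal_le_ofReal (by linarith)
      _ = 2 := by norm_num
  have hSsum : ∫⁻ q in S, F q = (∫⁻ q in S, T1 q) + (∫⁻ q in S, T2 q) + ∫⁻ q in S, T3 q := by
    simp only [hF]
    rw [lintegral_add_right _ hT3m, lintegral_add_right _ hT2m]
  have hKtop : K ≠ ⊤ := ENNReal.ofReal_ne_top
  have hSfin : ∫⁻ q in S, F q < ⊤ := by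
    rw [hSsum]
    have hb1 : ∫⁻ _ in Set.Ioo (0:ℝ) 1, (K + K) = (K + K) * volume (Set.Ioo (0:ℝ) 1) :=
      setLIntegral_const _ _
    have hvol : volume (Set.Ioo (0:ℝ) 1) = 1 := by
      rw [Real.volume_Ioo]; norm_num
    have hb3 : ∫⁻ x in Set.Ioo (0:ℝ) 1, ENNReal.ofReal ((1 - x) ^ β) * 2
        = (∫⁻ x in Set.Ioo (0:ℝ) 1, ENNReal.ofReal ((1 - x) ^ β)) * 2 :=
      lintegral_mul_const _ ((measurable_const.sub measurable_id).pow
        measurable_const).ennreal_ofReal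
    have h1 : ∫⁻ q in S, T1 q ≤ K + K := by
      rw [hb1, hvol, mul_one] at hI1; exact hI1
    have h2 : ∫⁻ q in S, T2 q ≤ K + K := by
      rw [hb1, hvol, mul_one] at hI2; exact hI2
    have h3 : ∫⁻ q in S, T3 q ≤ K * 2 := by
      rw [hb3] at hI3
      exact le_trans hI3 (by gcongr; exact lemC hβ1)
    calc (∫⁻ q in S, T1 q) + (∫⁻ q in S, T2 q) + ∫⁻ q in S, T3 q
        ≤ (K + K) + (K + K) + K * 2 := by gcongr
      _ < ⊤ := by
          apply ENNReal.add_lt_top.mpr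
          constructor
          · apply ENNReal.add_lt_top.mpr
            exact ⟨ENNReal.add_lt_top.mpr ⟨hKtop.lt_top, hKtop.lt_top⟩,
              ENNReal.add_lt_top.mpr ⟨hKtop.lt_top, hKtop.lt_top⟩⟩
          · exact ENNReal.mul_lt_top hKtop.lt_top (by norm_num)
  have hcusp_sub : cuspDomain α ⊆ S := fun q hq => ⟨hq.1, hq.2.1, hq.2.2.2⟩
  calc ∫⁻ q in cuspDomain α, ENNReal.ofReal (D q ^ β)
      ≤ ∫⁻ q in cuspDomain α, K4 * F q :=
        setLIntegral_mono (measurable_const.mul hFmeas) hpoint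
    _ = K4 * ∫⁻ q in cuspDomain α, F q := lintegral_const_mul _ hFmeas
    _ ≤ K4 * ∫⁻ q in S, F q := by gcongr
    _ < ⊤ := ENNReal.mul_lt_top ENNReal.ofReal_lt_top hSfin

end CuspAux

/-- On the cusp domain with `1/2 < α ≤ 1`, if `p·d^{1−α} ∈ L²(Ω)` and
`1 ≤ r < 2/(3−2α)`, then `p ∈ L^r(Ω)` with
`‖p‖_{L^r(Ω)} ≤ C ‖p·d^{1−α}‖_{L²(Ω)}`, `C` depending only on `α` and `r`. -/
theorem pressure_Lr_estimate_cusp (α r : ℝ) (hα : 1 / 2 < α) (hα1 : α ≤ 1)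
    (hr1 : 1 ≤ r) (hr2 : r < 2 / (3 - 2 * α))
    (d : ℝ × ℝ → ℝ) (hd : ∀ q, d q = Metric.infDist q (frontier (cuspDomain α))) :
    ∃ C : ℝ, 0 < C ∧ ∀ f : ℝ × ℝ → ℝ,
      MemLp (fun q => f q * d q ^ (1 - α)) 2 (volume.restrict (cuspDomain α)) →
      MemLp f (ENNReal.ofReal r) (volume.restrict (cuspDomain α)) ∧
      eLpNorm f (ENNReal.ofReal r) (volume.restrict (cuspDomain α)) ≤
        ENNReal.ofReal C *
          eLpNorm (fun q => f q * d q ^ (1 - α)) 2 (volume.restrict (cuspDomain α)) := by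
  classical
  set μ := volume.restrict (cuspDomain α) with hμ
  have hαpos : 0 < α := by linarith
  have h3 : 0 < 3 - 2 * α := by linarith
  have hrpos : 0 < r := lt_of_lt_of_le one_pos hr1
  have hr2' : r < 2 := lt_of_lt_of_le hr2 (by rw [div_le_iff₀ h3]; nlinarith)
  have h2r : 0 < 2 - r := by linarith
  set s := 2 * r / (2 - r) with hs
  have hs_pos : 0 < s := by positivity
  have hrs : 1 / r = 1 / s + 1 / 2 := by
    rw [hs]; field_simp; ring
  set β := (α - 1) * s with hβdef
  have hβ0 : β ≤ 0 := mul_nonpos_of_nonpos_of_nonneg (by linarith) hs_pos.le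
  have hrlt : r * (3 - 2 * α) < 2 := (lt_div_iff₀ h3).mp hr2
  have hβ1 : -1 < β := by
    have key : (-1 : ℝ) * (2 - r) < (α - 1) * (2 * r) := by nlinarith
    calc (-1 : ℝ) = -1 * (2 - r) / (2 - r) := by field_simp
      _ < (α - 1) * (2 * r) / (2 - r) := (div_lt_div_iff_of_pos_right h2r).mpr key
      _ = β := by rw [hβdef, hs]; ring
  have hdc : Continuous d := by
    have hdfun : d = fun q => Metric.infDist q (frontier (cuspDomain α)) := funext hd
    rw [hdfun]; exact Metric.continuous_infDist_pt _
  have hd_nonneg : ∀ q, 0 ≤ d q := fun q => by rw [hd]; exact Metric.infDist_nonneg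
  have hd_pos : ∀ q ∈ cuspDomain α, 0 < d q := by
    intro q hq
    obtain ⟨hx0, hx1, hy0, hyc⟩ := hq
    have hMpos : 0 < min (min |q.2| (q.1 ^ (1/α) - |q.2|)) (1 - q.1) / 4 := by
      have := lt_min (lt_min hy0 (by linarith : (0:ℝ) < q.1 ^ (1/α) - |q.2|))
        (by linarith : (0:ℝ) < 1 - q.1)
      linarith
    rw [hd]
    exact lt_of_lt_of_le hMpos (CuspAux.cusp_dist_lower hα hα1 ⟨hx0, hx1, hy0, hyc⟩)
  set g := fun q : ℝ × ℝ => d q ^ (α - 1) with hg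
  have hgm : Measurable g := hdc.measurable.pow measurable_const
  have hfin : ∫⁻ q in cuspDomain α, ENNReal.ofReal (d q ^ β) < ⊤ := by
    have hcongr : ∀ q : ℝ × ℝ, ENNReal.ofReal (d q ^ β)
        = ENNReal.ofReal ((Metric.infDist q (frontier (cuspDomain α))) ^ β) := by
      intro q; rw [hd]
    calc ∫⁻ q in cuspDomain α, ENNReal.ofReal (d q ^ β)
        = ∫⁻ q in cuspDomain α,
            ENNReal.ofReal ((Metric.infDist q (frontier (cuspDomain α))) ^ β) :=
          lintegral_congr fun q => hcongr q
      _ < ⊤ := CuspAux.cusp_lintegral_lt_top hα hα1 hβ1 hβ0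
  have hsne0 : ENNReal.ofReal s ≠ 0 := by
    simp only [ne_eq, ENNReal.ofReal_eq_zero, not_le]; exact hs_pos
  have hsnetop : ENNReal.ofReal s ≠ ⊤ := ENNReal.ofReal_ne_top
  have hgmem : MemLp g (ENNReal.ofReal s) μ := by
    refine ⟨hgm.aestronglyMeasurable, ?_⟩
    rw [eLpNorm_lt_top_iff_lintegral_rpow_enorm_lt_top hsne0 hsnetop,
      ENNReal.toReal_ofReal hs_pos.le]
    have heq : ∀ q : ℝ × ℝ, ((‖g q‖₊ : ENNReal)) ^ s = ENNReal.ofReal (d q ^ β) := by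
      intro q
      show ‖g q‖ₑ ^ s = _
      rw [Real.enorm_eq_ofReal (Real.rpow_nonneg (hd_nonneg q) _),
        ENNReal.ofReal_rpow_of_nonneg (Real.rpow_nonneg (hd_nonneg q) _) hs_pos.le]
      congr 1
      rw [← Real.rpow_mul (hd_nonneg q)]
    calc ∫⁻ q, ((‖g q‖₊ : ENNReal)) ^ s ∂μ = ∫⁻ q, ENNReal.ofReal (d q ^ β) ∂μ :=
          lintegral_congr fun q => heq q
      _ < ⊤ := hfin
  have hpqr : 1 / ENNReal.ofReal r = 1 / ENNReal.ofReal s + 1 / 2 := by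
    have h2e : (2 : ENNReal) = ENNReal.ofReal 2 := by norm_num
    rw [one_div, one_div, one_div, h2e, ← ENNReal.ofReal_inv_of_pos hrpos,
      ← ENNReal.ofReal_inv_of_pos hs_pos, ← ENNReal.ofReal_inv_of_pos (by norm_num : (0:ℝ) < 2),
      ← ENNReal.ofReal_add (by positivity) (by positivity)]
    congr 1
    rw [inv_eq_one_div, inv_eq_one_div, inv_eq_one_div]
    exact hrs
  set Cnn := eLpNorm g (ENNReal.ofReal s) μ with hCnn
  have hCnn_top : Cnn ≠ ⊤ := hgmem.2.ne
  refine ⟨Cnn.toReal + 1, by positivity, ?_⟩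
  intro f hf2
  set F2 := fun q : ℝ × ℝ => f q * d q ^ (1 - α) with hF2
  have hae : f =ᵐ[μ] g • F2 := by
    have hmem : ∀ᵐ q ∂μ, q ∈ cuspDomain α :=
      ae_restrict_mem (CuspAux.cusp_isOpen hαpos).measurableSet
    filter_upwards [hmem] with q hq
    have hdq := hd_pos q hq
    show f q = d q ^ (α - 1) * (f q * d q ^ (1 - α))
    have hcalc : d q ^ (α - 1) * (f q * d q ^ (1 - α))
        = f q * d q ^ ((α - 1) + (1 - α)) := by
      rw [Real.rpow_add hdq]; ring
    rw [hcalc]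
    norm_num
  have hsmul : eLpNorm (g • F2) (ENNReal.ofReal r) μ
      ≤ eLpNorm g (ENNReal.ofReal s) μ * eLpNorm F2 2 μ :=
    eLpNorm_smul_le_mul_eLpNorm hf2.1 hgmem.1 (hpqr := ⟨by simpa only [one_div] using hpqr.symm⟩)
  have hmemsmul : MemLp (g • F2) (ENNReal.ofReal r) μ := hf2.smul hgmem (hpqr := ⟨by simpa only [one_div] using hpqr.symm⟩)
  constructor
  · exact hmemsmul.ae_eq hae.symm
  · calc eLpNorm f (ENNReal.ofReal r) μ = eLpNorm (g • F2) (ENNReal.ofReal r) μ :=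
          eLpNorm_congr_ae hae
      _ ≤ Cnn * eLpNorm F2 2 μ := hsmul
      _ ≤ ENNReal.ofReal (Cnn.toReal + 1) * eLpNorm F2 2 μ := by
          gcongr
          calc Cnn = ENNReal.ofReal Cnn.toReal := (ENNReal.ofReal_toReal hCnn_top).symm
            _ ≤ ENNReal.ofReal (Cnn.toReal + 1) := ENNReal.ofReal_le_ofReal (by linarith)
end
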